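/- arXiv:1407.2696 — 6 statements merged into one kernel-verified Lean document; each statement's English description precedes it below -/
import Mathlib

section
/- Let n ≥ 3 be an integer, m = (n-2)/(n+2), and α, β ∈ ℝ. Let v be a radially symmetric solution of Δv^m + αv + βx·∇v = 0, v > 0, in ℝ^n∖{0}, and define w(ρ) = ρ^{-(n-2)/m} v(1/ρ) for ρ > 0. Then w is a radially symmetric solution of Δw^m + α'w + β'x·∇w = 0, w > 0, in ℝ^n∖{0}, where α' = α − ((n-2)/m)β and β' = −β. Moreover, if α = (2β+ρ₁)/(1-m) for some constant ρ₁ > 0, then α' = (2β'+ρ₁)/(1-m); and if β ≠ 0, then r^{α/β} v(r) = ρ^{α'/β'} w(ρ) for all r = 1/ρ > 0. -/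
open Real Filter Set Topology

noncomputable section

/-- A radially symmetric solution of `Δ v^m + α v + β x·∇v = 0`, `v > 0`, in `ℝⁿ \ {0}`,
identified with a smooth positive function on `(0,∞)` satisfying the radial ODE. -/
def IsSingularSolution (n : ℕ) (m α β : ℝ) (g : ℝ → ℝ) : Prop :=
  (∀ r > 0, 0 < g r) ∧ ContDiffOn ℝ (⊤ : ℕ∞) g (Ioi 0) ∧
    ∀ r > 0,
      deriv (deriv (fun x => g x ^ m)) r
        + (((n : ℝ) - 1) / r) * deriv (fun x => g x ^ m) r
        + α * g r + β * r * deriv g r = 0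

/-- the inversion formula. For `m = (n-2)/(n+2)`, if `v` is a radially
symmetric solution of the elliptic equation in `ℝⁿ \ {0}` with parameters `(α,β)`,
then `w(ρ) = ρ^{-(n-2)/m} v(1/ρ)` is a solution with parameters
`α' = α − ((n-2)/m)β`, `β' = −β`; if `α = (2β+ρ₁)/(1-m)` then `α' = (2β'+ρ₁)/(1-m)`;
and if `β ≠ 0` then `r^{α/β} v(r) = ρ^{α'/β'} w(ρ)` for `r = 1/ρ > 0`. -/
theorem stmt5 (n : ℕ) (m α β : ℝ)
    (hn : 3 ≤ n) (hm : m = ((n : ℝ) - 2) / ((n : ℝ) + 2))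
    (v : ℝ → ℝ)
    (hv : IsSingularSolution n m α β v) :
    IsSingularSolution n m (α - ((n : ℝ) - 2) / m * β) (-β)
        (fun ρ => ρ ^ (-(((n : ℝ) - 2) / m)) * v (1 / ρ)) ∧
      (∀ ρ₁ > 0, α = (2 * β + ρ₁) / (1 - m) →
        α - ((n : ℝ) - 2) / m * β = (2 * (-β) + ρ₁) / (1 - m)) ∧
      (β ≠ 0 → ∀ r > 0,
        r ^ (α / β) * v r =
          (1 / r) ^ ((α - ((n : ℝ) - 2) / m * β) / (-β)) *
            ((1 / r) ^ (-(((n : ℝ) - 2) / m)) * v (1 / (1 / r)))) := by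
  have hn3 : (3:ℝ) ≤ (n:ℝ) := by exact_mod_cast hn
  have hn2 : (0:ℝ) < (n:ℝ) - 2 := by linarith
  have hnp : (0:ℝ) < (n:ℝ) + 2 := by linarith
  have hm0 : 0 < m := by rw [hm]; positivity
  have hm1 : m < 1 := by rw [hm, div_lt_one hnp]; linarith
  have hmeq : ((n:ℝ) - 2) / m = (n:ℝ) + 2 := by rw [hm]; field_simp
  have hmul : (-((n:ℝ) + 2)) * m = -((n:ℝ) - 2) := by rw [hm]; field_simp
  obtain ⟨hvpos, hvC, hode⟩ := hv
  set f : ℝ → ℝ := (fun x => v x ^ m) with hfdef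
  have hfC : ContDiffOn ℝ (⊤:ℕ∞) f (Ioi 0) := fun x hx =>
    ((hvC.contDiffAt (isOpen_Ioi.mem_nhds hx)).rpow_const_of_ne
      (ne_of_gt (hvpos x hx))).contDiffWithinAt
  have hf'C : ContDiffOn ℝ (⊤:ℕ∞) (deriv f) (Ioi 0) :=
    hfC.deriv_of_isOpen isOpen_Ioi (by exact_mod_cast le_top)
  have hvD : ∀ x ∈ Ioi (0:ℝ), HasDerivAt v (deriv v x) x := fun x hx =>
    ((hvC.contDiffAt (isOpen_Ioi.mem_nhds hx)).differentiableAt (by simp)).hasDerivAt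
  have hfD : ∀ x ∈ Ioi (0:ℝ), HasDerivAt f (deriv f x) x := fun x hx =>
    ((hfC.contDiffAt (isOpen_Ioi.mem_nhds hx)).differentiableAt (by simp)).hasDerivAt
  have hf'D : ∀ x ∈ Ioi (0:ℝ), HasDerivAt (deriv f) (deriv (deriv f) x) x := fun x hx =>
    ((hf'C.contDiffAt (isOpen_Ioi.mem_nhds hx)).differentiableAt (by simp)).hasDerivAt
  set W : ℝ → ℝ := (fun ρ => ρ ^ (-(((n : ℝ) - 2) / m)) * v (1 / ρ)) with hWdef
  have hWeq : ∀ x ∈ Ioi (0:ℝ), W x = x ^ (-(n:ℤ)-2) * v x⁻¹ := by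
    intro x hx
    rw [hWdef]
    simp only
    rw [hmeq, one_div, show -((n:ℝ)+2) = ((-(n:ℤ)-2 : ℤ):ℝ) by push_cast; ring,
      Real.rpow_intCast]
  have hFeq : ∀ x ∈ Ioi (0:ℝ), W x ^ m = x ^ ((2:ℤ)-(n:ℤ)) * f x⁻¹ := by
    intro x hx
    rw [hWdef]
    simp only
    rw [hmeq, one_div,
      Real.mul_rpow (Real.rpow_nonneg (le_of_lt hx) _) (le_of_lt (hvpos _ (inv_pos.mpr hx))),
      ← Real.rpow_mul (le_of_lt hx), hmul,
      show -((n:ℝ)-2) = (((2:ℤ)-(n:ℤ) : ℤ):ℝ) by push_cast; ring, Real.rpow_intCast]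
  refine ⟨⟨?_, ?_, ?_⟩, ?_, ?_⟩
  · -- positivity
    intro ρ hρ
    exact mul_pos (Real.rpow_pos_of_pos hρ _) (hvpos _ (by positivity))
  · -- smoothness
    intro x hx
    have h1 : ContDiffAt ℝ (⊤:ℕ∞) (fun ρ:ℝ => ρ ^ (-(((n:ℝ)-2)/m))) x :=
      Real.contDiffAt_rpow_const_of_ne (ne_of_gt hx)
    have h2 : ContDiffAt ℝ (⊤:ℕ∞) (fun ρ:ℝ => v (1/ρ)) x := by
      have hinv : ContDiffAt ℝ (⊤:ℕ∞) (fun ρ:ℝ => 1/ρ) x := by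
        simpa [one_div] using (contDiffAt_inv (𝕜 := ℝ) (ne_of_gt hx))
      exact (hvC.contDiffAt (isOpen_Ioi.mem_nhds (mem_Ioi.mpr (one_div_pos.mpr hx)))).comp x hinv
    exact (h1.mul h2).contDiffWithinAt
  · -- the ODE
    intro ρ hρ
    have hρ0 : ρ ≠ 0 := ne_of_gt hρ
    have hrmem : ρ⁻¹ ∈ Ioi (0:ℝ) := mem_Ioi.mpr (inv_pos.mpr hρ)
    have hmem : Ioi (0:ℝ) ∈ 𝓝 ρ := isOpen_Ioi.mem_nhds hρ
    have hfI : HasDerivAt (fun y:ℝ => f y⁻¹) (deriv f ρ⁻¹ * -(ρ^2)⁻¹) ρ :=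
      (hfD ρ⁻¹ hrmem).comp ρ (hasDerivAt_inv hρ0)
    have hvI : HasDerivAt (fun y:ℝ => v y⁻¹) (deriv v ρ⁻¹ * -(ρ^2)⁻¹) ρ :=
      (hvD ρ⁻¹ hrmem).comp ρ (hasDerivAt_inv hρ0)
    have hAI : HasDerivAt (fun y:ℝ => deriv f y⁻¹) (deriv (deriv f) ρ⁻¹ * -(ρ^2)⁻¹) ρ :=
      (hf'D ρ⁻¹ hrmem).comp ρ (hasDerivAt_inv hρ0)
    have hBI : HasDerivAt (fun y:ℝ => -(y^2)⁻¹) (-(-(↑(2:ℕ) * ρ^(2-1)) / (ρ^2)^2)) ρ :=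
      ((hasDerivAt_pow 2 ρ).inv (pow_ne_zero 2 hρ0)).neg
    -- first derivative of F = fun x => W x ^ m on Ioi 0
    have hF0D : ∀ x ∈ Ioi (0:ℝ), HasDerivAt (fun y : ℝ => y ^ ((2:ℤ)-(n:ℤ)) * f y⁻¹)
        (((((2:ℤ)-(n:ℤ)) : ℤ) : ℝ) * x ^ ((2:ℤ)-(n:ℤ)-1) * f x⁻¹
          + x ^ ((2:ℤ)-(n:ℤ)) * (deriv f x⁻¹ * -(x^2)⁻¹)) x := by
      intro x hx
      have hx0 : x ≠ 0 := ne_of_gt hx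
      exact (hasDerivAt_zpow _ _ (Or.inl hx0)).mul
        ((hfD x⁻¹ (mem_Ioi.mpr (inv_pos.mpr hx))).comp x (hasDerivAt_inv hx0))
    have hderivF : ∀ x ∈ Ioi (0:ℝ), deriv (fun y => W y ^ m) x
        = ((((2:ℤ)-(n:ℤ)) : ℤ) : ℝ) * x ^ ((2:ℤ)-(n:ℤ)-1) * f x⁻¹
          + x ^ ((2:ℤ)-(n:ℤ)) * (deriv f x⁻¹ * -(x^2)⁻¹) := by
      intro x hx
      have he : (fun y => W y ^ m) =ᶠ[𝓝 x] (fun y => y ^ ((2:ℤ)-(n:ℤ)) * f y⁻¹) :=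
        eventuallyEq_of_mem (isOpen_Ioi.mem_nhds hx) hFeq
      rw [he.deriv_eq, (hF0D x hx).deriv]
    -- second derivative at ρ
    have hGd : HasDerivAt (fun x : ℝ => ((((2:ℤ)-(n:ℤ)) : ℤ) : ℝ) * x ^ ((2:ℤ)-(n:ℤ)-1) * f x⁻¹
          + x ^ ((2:ℤ)-(n:ℤ)) * (deriv f x⁻¹ * -(x^2)⁻¹))
        (((((2:ℤ)-(n:ℤ)):ℤ):ℝ) * (((((2:ℤ)-(n:ℤ)-1 : ℤ)):ℝ) * ρ ^ ((2:ℤ)-(n:ℤ)-1-1)) * f ρ⁻¹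
            + ((((2:ℤ)-(n:ℤ)):ℤ):ℝ) * ρ ^ ((2:ℤ)-(n:ℤ)-1) * (deriv f ρ⁻¹ * -(ρ^2)⁻¹)
          + ((((((2:ℤ)-(n:ℤ)):ℤ):ℝ) * ρ ^ ((2:ℤ)-(n:ℤ)-1)) * (deriv f ρ⁻¹ * -(ρ^2)⁻¹)
            + ρ ^ ((2:ℤ)-(n:ℤ)) * ((deriv (deriv f) ρ⁻¹ * -(ρ^2)⁻¹) * -(ρ^2)⁻¹
              + deriv f ρ⁻¹ * -(-(↑(2:ℕ) * ρ^(2-1)) / (ρ^2)^2)))) ρ := by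
      exact (((hasDerivAt_zpow ((2:ℤ)-(n:ℤ)-1) ρ (Or.inl hρ0)).const_mul _).mul hfI).add
        ((hasDerivAt_zpow ((2:ℤ)-(n:ℤ)) ρ (Or.inl hρ0)).mul (hAI.mul hBI))
    have hWd : HasDerivAt (fun x:ℝ => x ^ (-(n:ℤ)-2) * v x⁻¹)
        (((-(n:ℤ)-2 : ℤ):ℝ) * ρ ^ (-(n:ℤ)-2-1) * v ρ⁻¹
          + ρ ^ (-(n:ℤ)-2) * (deriv v ρ⁻¹ * -(ρ^2)⁻¹)) ρ :=
      (hasDerivAt_zpow _ _ (Or.inl hρ0)).mul hvI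
    have he1 : deriv (fun y => W y ^ m) =ᶠ[𝓝 ρ]
        (fun x : ℝ => ((((2:ℤ)-(n:ℤ)) : ℤ) : ℝ) * x ^ ((2:ℤ)-(n:ℤ)-1) * f x⁻¹
          + x ^ ((2:ℤ)-(n:ℤ)) * (deriv f x⁻¹ * -(x^2)⁻¹)) :=
      eventuallyEq_of_mem hmem hderivF
    have he2 : W =ᶠ[𝓝 ρ] (fun x : ℝ => x ^ (-(n:ℤ)-2) * v x⁻¹) :=
      eventuallyEq_of_mem hmem hWeq
    rw [he1.deriv_eq, hGd.deriv, hderivF ρ (mem_Ioi.mpr hρ), hWeq ρ (mem_Ioi.mpr hρ),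
      he2.deriv_eq, hWd.deriv, hmeq]
    -- zpow normalisation
    have z1 : ρ ^ ((2:ℤ)-(n:ℤ)) = ρ^2 / ρ^(n:ℕ) := by
      rw [zpow_sub₀ hρ0, zpow_natCast, zpow_ofNat]
    have z2 : ρ ^ ((2:ℤ)-(n:ℤ)-1) = ρ / ρ^(n:ℕ) := by
      rw [zpow_sub₀ hρ0, zpow_sub₀ hρ0, zpow_natCast, zpow_ofNat, zpow_one]; field_simp
    have z3 : ρ ^ ((2:ℤ)-(n:ℤ)-1-1) = 1 / ρ^(n:ℕ) := by
      rw [zpow_sub₀ hρ0, zpow_sub₀ hρ0, zpow_sub₀ hρ0, zpow_natCast, zpow_ofNat, zpow_one]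
      field_simp
    have z4 : ρ ^ (-(n:ℤ)-2) = 1 / (ρ^(n:ℕ) * ρ^2) := by
      rw [zpow_sub₀ hρ0, zpow_neg, zpow_natCast, zpow_ofNat]; field_simp
    have z5 : ρ ^ (-(n:ℤ)-2-1) = 1 / (ρ^(n:ℕ) * ρ^3) := by
      rw [zpow_sub₀ hρ0, zpow_sub₀ hρ0, zpow_neg, zpow_natCast, zpow_ofNat, zpow_one]
      field_simp
    simp only [z1, z2, z3, z4, z5]
    push_cast
    have hode' := hode ρ⁻¹ (inv_pos.mpr hρ)
    have hEf : deriv (deriv f) ρ⁻¹ = -(((n:ℝ)-1)/ρ⁻¹ * deriv f ρ⁻¹) - α * v ρ⁻¹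
        - β * ρ⁻¹ * deriv v ρ⁻¹ := by linarith
    rw [hEf]
    have hN : ρ^(n:ℕ) ≠ 0 := pow_ne_zero _ hρ0
    field_simp
    ring
  · -- part 2
    intro ρ₁ _ hα
    rw [hmeq, hα]
    have h1m : 1 - m ≠ 0 := by linarith
    have h4 : (1 - m) * ((n:ℝ) + 2) = 4 := by rw [hm]; field_simp; ring
    field_simp
    linear_combination (-β) * h4
  · -- part 3
    intro hβ r hr
    rw [hmeq]
    simp only [one_div, inv_inv]
    rw [Real.inv_rpow hr.le, Real.inv_rpow hr.le,
      ← Real.rpow_neg hr.le, ← Real.rpow_neg hr.le, ← mul_assoc, ← Real.rpow_add hr]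
    have : -((α - ((n:ℝ)+2) * β) / -β) + -(-((n:ℝ)+2)) = α / β := by
      rw [div_neg, neg_neg, neg_neg, sub_div, mul_div_assoc, div_self hβ]; ring
    rw [this]
end
end

section
/- Let n ≥ 3 be an integer, 0 < m < (n-2)/n, ρ₁ > 0, λ > 0, β > β₁ = ρ₁/(n-2-nm) and α = (2β+ρ₁)/(1-m). Let g_λ be a radially symmetric solution of Δv^m + αv + βx·∇v = 0, v > 0, in ℝ^n∖{0} satisfying lim_{r→0+} r^{α/β} g_λ(r) = λ^{-ρ₁/((1-m)β)}. Then the function ρ ↦ g_λ(ρ)ρ^{n-1} is integrable on (0,r) for every r > 0, and r^{n-1}(g_λ^m)'(r) + β r^n g_λ(r) = (nβ − α) ∫₀^r g_λ(ρ) ρ^{n-1} dρ for all r > 0. -/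
open Real Filter Set MeasureTheory
open scoped Topology

noncomputable section

set_option maxHeartbeats 4000000 in
/-- for `β > β₁`, the singular solution with the prescribed blow-up rate at
the origin satisfies the integral identity
`r^{n-1}(g^m)'(r) + β rⁿ g(r) = (nβ−α) ∫₀^r g(ρ) ρ^{n-1} dρ`. -/
theorem stmt8 (n : ℕ) (m ρ₁ lam β α : ℝ)
    (hn : 3 ≤ n) (hm : 0 < m) (hm2 : m < ((n : ℝ) - 2) / n)
    (hρ : 0 < ρ₁) (hlam : 0 < lam)
    (hβ : β > ρ₁ / ((n : ℝ) - 2 - n * m))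
    (hα : α = (2 * β + ρ₁) / (1 - m))
    (g : ℝ → ℝ)
    (hg : IsSingularSolution n m α β g)
    (hlim : Tendsto (fun r => r ^ (α / β) * g r) (nhdsWithin 0 (Ioi 0))
      (nhds (lam ^ (-(ρ₁ / ((1 - m) * β)))))) :
    ∀ r > 0,
      IntegrableOn (fun ρ => g ρ * ρ ^ ((n : ℝ) - 1)) (Ioo 0 r) ∧
      r ^ ((n : ℝ) - 1) * deriv (fun x => g x ^ m) r + β * r ^ (n : ℝ) * g r =
        ((n : ℝ) * β - α) * ∫ ρ in Ioo (0 : ℝ) r, g ρ * ρ ^ ((n : ℝ) - 1) := by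
  obtain ⟨hgpos, hgsm, hode⟩ := hg
  set gm : ℝ → ℝ := fun x => g x ^ m with hgmdef
  -- numeric facts
  have hn3 : (3:ℝ) ≤ (n:ℝ) := by exact_mod_cast hn
  have hnpos : (0:ℝ) < (n:ℝ) := by linarith
  have hn2 : (0:ℝ) < (n:ℝ) - 2 := by linarith
  have hmn : m * (n:ℝ) < (n:ℝ) - 2 := (lt_div_iff₀ hnpos).mp hm2
  have hden : (0:ℝ) < (n:ℝ) - 2 - n * m := by nlinarith
  have hβpos : (0:ℝ) < β := lt_trans (div_pos hρ hden) hβ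
  have hm1 : m < 1 := by nlinarith
  have h1m : (0:ℝ) < 1 - m := by linarith
  have hαpos : (0:ℝ) < α := by rw [hα]; positivity
  have hαβ : α < (n:ℝ) * β := by
    rw [hα, div_lt_iff₀ h1m]
    have h2 := (div_lt_iff₀ hden).mp hβ
    nlinarith
  have hnβα : (0:ℝ) < (n:ℝ) * β - α := by linarith
  have hq : (0:ℝ) < α / β := div_pos hαpos hβpos
  have hqn : α / β < (n:ℝ) := (div_lt_iff₀ hβpos).mpr (by linarith)
  have hqm : m * (α / β) < (n:ℝ) - 2 := by nlinarith
  -- smoothness facts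
  have hSopen : IsOpen (Ioi (0:ℝ)) := isOpen_Ioi
  have hgcont : ContinuousOn g (Ioi 0) := hgsm.continuousOn
  have hgm_cd : ContDiffOn ℝ (⊤:ℕ∞) gm (Ioi 0) :=
    hgsm.rpow_const_of_ne fun x hx => (hgpos x hx).ne'
  have hg_diff : ∀ r ∈ Ioi (0:ℝ), HasDerivAt g (deriv g r) r := fun r hr =>
    ((hgsm.differentiableOn (by simp)).differentiableAt
      (hSopen.mem_nhds hr)).hasDerivAt
  have hgm1 : ∀ r ∈ Ioi (0:ℝ), HasDerivAt gm (deriv gm r) r := fun r hr =>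
    ((hgm_cd.differentiableOn (by simp)).differentiableAt
      (hSopen.mem_nhds hr)).hasDerivAt
  have hgm_cd' : ContDiffOn ℝ (⊤:ℕ∞) (deriv gm) (Ioi 0) :=
    ((contDiffOn_infty_iff_deriv_of_isOpen hSopen).1 hgm_cd).2
  have hgm2 : ∀ r ∈ Ioi (0:ℝ), HasDerivAt (deriv gm) (deriv (deriv gm) r) r := fun r hr =>
    ((hgm_cd'.differentiableOn (by simp)).differentiableAt
      (hSopen.mem_nhds hr)).hasDerivAt
  -- the key function F
  set F : ℝ → ℝ := fun r => r ^ ((n:ℝ)-1) * deriv gm r + β * r ^ (n:ℝ) * g r with hFdef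
  -- derivative of F
  have hF' : ∀ r ∈ Ioi (0:ℝ),
      HasDerivAt F (((n:ℝ)*β - α) * (g r * r ^ ((n:ℝ)-1))) r := by
    intro r hr
    have hrpos : (0:ℝ) < r := hr
    have hrne : r ≠ 0 := ne_of_gt hrpos
    have h1 : HasDerivAt (fun x:ℝ => x ^ ((n:ℝ)-1)) (((n:ℝ)-1) * r ^ ((n:ℝ)-1-1)) r :=
      Real.hasDerivAt_rpow_const (Or.inl hrne)
    have h2 : HasDerivAt (fun x:ℝ => x ^ ((n:ℝ))) ((n:ℝ) * r ^ ((n:ℝ)-1)) r :=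
      Real.hasDerivAt_rpow_const (Or.inl hrne)
    have hAB := (h1.mul (hgm2 r hr)).add ((h2.const_mul β).mul (hg_diff r hr))
    rw [hFdef]
    refine hAB.congr_deriv ?_
    have e2 : r ^ ((n:ℝ)-1-1) = r ^ ((n:ℝ)-2) := by
      congr 1; ring
    have e1 : r ^ ((n:ℝ)-1) = r ^ ((n:ℝ)-2) * r := by
      rw [show ((n:ℝ)-1) = ((n:ℝ)-2) + 1 from by ring, Real.rpow_add hrpos, Real.rpow_one]
    have eN : r ^ ((n:ℝ)) = r ^ ((n:ℝ)-2) * r * r := by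
      conv_lhs => rw [show ((n:ℝ)) = ((n:ℝ)-2) + 1 + 1 from by ring]
      rw [Real.rpow_add hrpos, Real.rpow_add hrpos, Real.rpow_one]
    have hode'' : deriv (deriv gm) r
        = -(((n:ℝ)-1)/r * deriv gm r + α * g r + β * r * deriv g r) := by
      have := hode r hr; linarith
    rw [e2, e1, eN, hode'']
    field_simp
    ring
  -- continuity of the integrand
  have hrpow_cont : ∀ c : ℝ, ContinuousOn (fun x:ℝ => x ^ c) (Ioi 0) :=
    fun c x hx => (Real.continuousAt_rpow_const x c (Or.inl (ne_of_gt hx))).continuousWithinAt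
  have hf_cont : ContinuousOn (fun x => g x * x ^ ((n:ℝ)-1)) (Ioi 0) :=
    hgcont.mul (hrpow_cont _)
  -- fundamental theorem of calculus for F
  have key : ∀ a b : ℝ, 0 < a → a ≤ b →
      ((n:ℝ)*β - α) * (∫ x in a..b, g x * x ^ ((n:ℝ)-1)) = F b - F a := by
    intro a b ha hab
    have hsub : Set.uIcc a b ⊆ Ioi (0:ℝ) := by
      rw [uIcc_of_le hab]; exact fun x hx => lt_of_lt_of_le ha hx.1
    rw [← intervalIntegral.integral_const_mul]
    refine intervalIntegral.integral_eq_sub_of_hasDerivAt (fun x hx => hF' x (hsub hx)) ?_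
    exact (continuousOn_const.mul (hf_cont.mono hsub)).intervalIntegrable
  -- monotonicity of F
  have hmono : ∀ a b : ℝ, 0 < a → a ≤ b → F a ≤ F b := by
    intro a b ha hab
    have hk := key a b ha hab
    have hnn : 0 ≤ ∫ x in a..b, g x * x ^ ((n:ℝ)-1) := by
      refine intervalIntegral.integral_nonneg hab (fun u hu => ?_)
      exact mul_nonneg (hgpos u (lt_of_lt_of_le ha hu.1)).le (Real.rpow_nonneg (by linarith [hu.1]) _)
    nlinarith
  -- limits at the origin
  have hrpow0 : ∀ p : ℝ, 0 < p → Tendsto (fun r:ℝ => r ^ p) (𝓝[>] (0:ℝ)) (𝓝 0) := by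
    intro p hp
    have := (Real.continuousAt_rpow_const 0 p (Or.inr hp.le)).tendsto
    rw [Real.zero_rpow hp.ne'] at this
    exact this.mono_left nhdsWithin_le_nhds
  have T1 : Tendsto (fun r => r ^ (n:ℝ) * g r) (𝓝[>] (0:ℝ)) (𝓝 0) := by
    have h1 := hrpow0 ((n:ℝ) - α/β) (by linarith)
    have h2 := h1.mul hlim
    rw [zero_mul] at h2
    refine h2.congr' ?_
    filter_upwards [self_mem_nhdsWithin] with r hr
    have hr' : (0:ℝ) < r := hr
    rw [← mul_assoc, ← Real.rpow_add hr']
    congr 2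
    ring
  have T2 : Tendsto (fun r => r ^ ((n:ℝ)-2) * gm r) (𝓝[>] (0:ℝ)) (𝓝 0) := by
    have h2 : Tendsto (fun r => (r ^ (α/β) * g r) ^ m) (𝓝[>] (0:ℝ))
        (𝓝 ((lam ^ (-(ρ₁ / ((1 - m) * β)))) ^ m)) := hlim.rpow_const (Or.inr hm.le)
    have h1 := hrpow0 ((n:ℝ) - 2 - m*(α/β)) (by linarith)
    have h3 := h1.mul h2
    rw [zero_mul] at h3
    refine h3.congr' ?_
    filter_upwards [self_mem_nhdsWithin] with r hr
    have hr' : (0:ℝ) < r := hr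
    simp only [hgmdef]
    rw [Real.mul_rpow (Real.rpow_nonneg hr'.le _) (hgpos r hr).le,
      ← Real.rpow_mul hr'.le, ← mul_assoc, ← Real.rpow_add hr',
      show ((n:ℝ)-2-m*(α/β)) + (α/β)*m = (n:ℝ)-2 from by ring]
  -- Claim A : F is nonnegative
  have hFnn : ∀ a, 0 < a → 0 ≤ F a := by
    intro a₀ ha₀
    by_contra hneg
    push_neg at hneg
    set c : ℝ := F a₀ / ((n:ℝ) - 2) with hc
    have hcneg : c < 0 := div_neg_of_neg_of_pos hneg hn2
    set φ : ℝ → ℝ := fun x => gm x + c * x ^ (-((n:ℝ)-2)) with hφdef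
    have hφd : ∀ x ∈ Ioi (0:ℝ),
        HasDerivAt φ (deriv gm x + c * (-((n:ℝ)-2) * x ^ (-((n:ℝ)-2)-1))) x := fun x hx =>
      (hgm1 x hx).add ((Real.hasDerivAt_rpow_const (Or.inl (ne_of_gt hx))).const_mul c)
    have hanti : AntitoneOn φ (Ioc 0 a₀) := by
      refine antitoneOn_of_deriv_nonpos (convex_Ioc 0 a₀)
        (fun x hx => (hφd x hx.1).continuousAt.continuousWithinAt) ?_ ?_
      · rw [interior_Ioc]
        exact fun x hx => ((hφd x hx.1).differentiableAt).differentiableWithinAt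
      · rw [interior_Ioc]
        intro x hx
        have hxpos : (0:ℝ) < x := hx.1
        rw [(hφd x hxpos).deriv]
        have hx1 : (0:ℝ) < x ^ ((n:ℝ)-1) := Real.rpow_pos_of_pos hxpos _
        have e0 : x ^ ((n:ℝ)-1) * x ^ (-((n:ℝ)-2)-1) = 1 := by
          rw [← Real.rpow_add hxpos,
            show ((n:ℝ)-1) + (-((n:ℝ)-2)-1) = 0 from by ring, Real.rpow_zero]
        have hFx : F x ≤ F a₀ := hmono x a₀ hxpos hx.2.le
        have hgx : 0 < β * x ^ (n:ℝ) * g x :=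
          mul_pos (mul_pos hβpos (Real.rpow_pos_of_pos hxpos _)) (hgpos x hxpos)
        have hkey : x ^ ((n:ℝ)-1) * deriv gm x ≤ F a₀ := by
          have hFeq : F x = x ^ ((n:ℝ)-1) * deriv gm x + β * x ^ (n:ℝ) * g x := by
            rw [hFdef]
          linarith
        by_contra hpos
        push_neg at hpos
        have hmul := mul_pos hx1 hpos
        rw [mul_add] at hmul
        have e1 : x ^ ((n:ℝ)-1) * (c * (-((n:ℝ)-2) * x ^ (-((n:ℝ)-2)-1))) = -F a₀ := by
          have h' : x ^ ((n:ℝ)-1) * (c * (-((n:ℝ)-2) * x ^ (-((n:ℝ)-2)-1)))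
              = (x ^ ((n:ℝ)-1) * x ^ (-((n:ℝ)-2)-1)) * (c * (-((n:ℝ)-2))) := by ring
          rw [h', e0, one_mul, hc]
          field_simp
        linarith
    -- now derive the contradiction via limits
    have hbound : ∀ᶠ r in 𝓝[>] (0:ℝ), φ a₀ * r ^ ((n:ℝ)-2) - c ≤ r ^ ((n:ℝ)-2) * gm r := by
      filter_upwards [Ioo_mem_nhdsGT_of_mem (left_mem_Ico.mpr ha₀)] with r hr
      have hrpos : (0:ℝ) < r := hr.1
      have hφr : φ a₀ ≤ φ r := hanti ⟨hrpos, hr.2.le⟩ ⟨ha₀, le_refl _⟩ hr.2.le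
      have e0 : r ^ ((n:ℝ)-2) * r ^ (-((n:ℝ)-2)) = 1 := by
        rw [← Real.rpow_add hrpos, show ((n:ℝ)-2) + (-((n:ℝ)-2)) = 0 from by ring,
          Real.rpow_zero]
      have hA : (0:ℝ) < r ^ ((n:ℝ)-2) := Real.rpow_pos_of_pos hrpos _
      have hφrr : φ a₀ ≤ gm r + c * r ^ (-((n:ℝ)-2)) := by
        have hre : φ r = gm r + c * r ^ (-((n:ℝ)-2)) := by rw [hφdef]
        linarith
      have h1 : r ^ ((n:ℝ)-2) * φ a₀ ≤ r ^ ((n:ℝ)-2) * (gm r + c * r ^ (-((n:ℝ)-2))) :=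
        mul_le_mul_of_nonneg_left hφrr hA.le
      have h2 : r ^ ((n:ℝ)-2) * (gm r + c * r ^ (-((n:ℝ)-2)))
          = r ^ ((n:ℝ)-2) * gm r + c * (r ^ ((n:ℝ)-2) * r ^ (-((n:ℝ)-2))) := by ring
      rw [h2, e0, mul_one] at h1
      linarith
    have hL : Tendsto (fun r:ℝ => φ a₀ * r ^ ((n:ℝ)-2) - c) (𝓝[>] (0:ℝ)) (𝓝 (-c)) := by
      have := ((hrpow0 ((n:ℝ)-2) hn2).const_mul (φ a₀)).sub_const c
      rw [mul_zero, zero_sub] at this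
      exact this
    have : -c ≤ 0 := le_of_tendsto_of_tendsto hL T2 hbound
    linarith
  -- Claim B : F gets arbitrarily small
  have hFsmall : ∀ ε : ℝ, 0 < ε → ∃ a, 0 < a ∧ F a < ε := by
    intro ε hε
    by_contra hcon
    push_neg at hcon
    have T1β : Tendsto (fun r => β * (r ^ (n:ℝ) * g r)) (𝓝[>] (0:ℝ)) (𝓝 0) := by
      have := T1.const_mul β; rwa [mul_zero] at this
    have hev : ∀ᶠ r in 𝓝[>] (0:ℝ), β * (r ^ (n:ℝ) * g r) < ε/2 :=
      T1β.eventually_lt_const (by linarith)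
    rw [eventually_iff, mem_nhdsGT_iff_exists_Ioc_subset] at hev
    obtain ⟨a₁, ha₁, hsub⟩ := hev
    have ha₁' : (0:ℝ) < a₁ := ha₁
    set K : ℝ := (ε/2) / ((n:ℝ)-2) with hK
    have hKpos : 0 < K := div_pos (by linarith) hn2
    set ψ : ℝ → ℝ := fun x => gm x + K * x ^ (-((n:ℝ)-2)) with hψdef
    have hψd : ∀ x ∈ Ioi (0:ℝ),
        HasDerivAt ψ (deriv gm x + K * (-((n:ℝ)-2) * x ^ (-((n:ℝ)-2)-1))) x := fun x hx =>
      (hgm1 x hx).add ((Real.hasDerivAt_rpow_const (Or.inl (ne_of_gt hx))).const_mul K)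
    have hmon : MonotoneOn ψ (Ioc 0 a₁) := by
      refine monotoneOn_of_deriv_nonneg (convex_Ioc 0 a₁)
        (fun x hx => (hψd x hx.1).continuousAt.continuousWithinAt) ?_ ?_
      · rw [interior_Ioc]
        exact fun x hx => ((hψd x hx.1).differentiableAt).differentiableWithinAt
      · rw [interior_Ioc]
        intro x hx
        have hxpos : (0:ℝ) < x := hx.1
        rw [(hψd x hxpos).deriv]
        have hx1 : (0:ℝ) < x ^ ((n:ℝ)-1) := Real.rpow_pos_of_pos hxpos _
        have e0 : x ^ ((n:ℝ)-1) * x ^ (-((n:ℝ)-2)-1) = 1 := by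
          rw [← Real.rpow_add hxpos,
            show ((n:ℝ)-1) + (-((n:ℝ)-2)-1) = 0 from by ring, Real.rpow_zero]
        have hsmall : β * (x ^ (n:ℝ) * g x) < ε/2 := hsub ⟨hxpos, hx.2.le⟩
        have hεF : ε ≤ F x := hcon x hxpos
        have hkey : ε/2 ≤ x ^ ((n:ℝ)-1) * deriv gm x := by
          have hFeq : F x = x ^ ((n:ℝ)-1) * deriv gm x + β * x ^ (n:ℝ) * g x := by
            rw [hFdef]
          nlinarith [hsmall]
        by_contra hneg'
        push_neg at hneg'
        have hmul := mul_neg_of_pos_of_neg hx1 hneg'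
        rw [mul_add] at hmul
        have e1 : x ^ ((n:ℝ)-1) * (K * (-((n:ℝ)-2) * x ^ (-((n:ℝ)-2)-1))) = -(ε/2) := by
          have h' : x ^ ((n:ℝ)-1) * (K * (-((n:ℝ)-2) * x ^ (-((n:ℝ)-2)-1)))
              = (x ^ ((n:ℝ)-1) * x ^ (-((n:ℝ)-2)-1)) * (K * (-((n:ℝ)-2))) := by ring
          rw [h', e0, one_mul, hK]
          field_simp
        linarith
    -- K * r^{-(n-2)} is bounded by ψ a₁ on Ioc 0 a₁
    have hKbdd : ∀ r ∈ Ioc (0:ℝ) a₁, K * r ^ (-((n:ℝ)-2)) < ψ a₁ := by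
      intro r hr
      have hψr : ψ r ≤ ψ a₁ := hmon hr ⟨ha₁', le_refl _⟩ hr.2
      have hgmr : 0 < gm r := by
        rw [hgmdef]; exact Real.rpow_pos_of_pos (hgpos r hr.1) m
      have : ψ r = gm r + K * r ^ (-((n:ℝ)-2)) := by rw [hψdef]
      linarith
    -- but K * r^{-(n-2)} → ∞
    have hinf : Tendsto (fun r:ℝ => K * r ^ (-((n:ℝ)-2))) (𝓝[>] (0:ℝ)) atTop := by
      refine Tendsto.const_mul_atTop hKpos ?_
      have h1 := (tendsto_rpow_atTop hn2).comp tendsto_inv_nhdsGT_zero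
      refine h1.congr' ?_
      filter_upwards [self_mem_nhdsWithin] with r hr
      have hrpos : (0:ℝ) < r := hr
      rw [Function.comp_apply, Real.rpow_neg hrpos.le, ← Real.inv_rpow hrpos.le]
    have hcontra := (hinf.eventually_gt_atTop (ψ a₁)).and
      (eventually_mem_set.mpr (Ioc_mem_nhdsGT_of_mem (left_mem_Ico.mpr ha₁')))
    obtain ⟨r₂, hr₂1, hr₂2⟩ := hcontra.exists
    exact absurd (hKbdd r₂ hr₂2) (not_lt.mpr hr₂1.le)
  -- F tends to 0 at the origin
  have hF0 : Tendsto F (𝓝[>] (0:ℝ)) (𝓝 0) := by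
    rw [tendsto_order]
    constructor
    · intro b hb
      filter_upwards [self_mem_nhdsWithin] with a ha
      exact lt_of_lt_of_le hb (hFnn a ha)
    · intro b hb
      obtain ⟨a₀, ha₀, hFa₀⟩ := hFsmall b hb
      filter_upwards [Ioo_mem_nhdsGT_of_mem (left_mem_Ico.mpr ha₀)] with a ha
      exact lt_of_le_of_lt (hmono a a₀ ha.1 ha.2.le) hFa₀
  -- main conclusion
  intro r hr
  -- integrability
  have hInt : IntegrableOn (fun ρ => g ρ * ρ ^ ((n:ℝ)-1)) (Ioc 0 r) := by
    set a : ℕ → ℝ := fun k => r / ((k:ℝ)+2) with hadef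
    have hapos : ∀ k, 0 < a k := fun k => div_pos hr (by positivity)
    have halt : ∀ k, a k ≤ r := by
      intro k
      rw [hadef]
      exact div_le_self hr.le (by linarith [Nat.cast_nonneg (α := ℝ) k])
    have hfi : ∀ k, IntegrableOn (fun ρ => g ρ * ρ ^ ((n:ℝ)-1)) (Ioc (a k) r) := by
      intro k
      have hc : ContinuousOn (fun ρ => g ρ * ρ ^ ((n:ℝ)-1)) (Icc (a k) r) :=
        hf_cont.mono (fun x hx => lt_of_lt_of_le (hapos k) hx.1)
      exact hc.integrableOn_Icc.mono_set Ioc_subset_Icc_self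
    have hta : Tendsto a atTop (𝓝 0) := by
      rw [hadef]
      exact tendsto_const_nhds.div_atTop
        (tendsto_atTop_add_const_right _ 2 tendsto_natCast_atTop_atTop)
    refine integrableOn_Ioc_of_intervalIntegral_norm_bounded_left
      (I := F r / ((n:ℝ)*β - α)) hfi hta ?_
    refine Eventually.of_forall fun k => ?_
    have h1 : (∫ x in Ioc (a k) r, ‖g x * x ^ ((n:ℝ)-1)‖)
        = ∫ x in Ioc (a k) r, g x * x ^ ((n:ℝ)-1) := by
      refine setIntegral_congr_fun measurableSet_Ioc fun x hx => ?_
      have hxpos : (0:ℝ) < x := lt_of_lt_of_le (hapos k) hx.1.le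
      exact Real.norm_of_nonneg (mul_nonneg (hgpos x hxpos).le (Real.rpow_nonneg hxpos.le _))
    rw [h1, ← intervalIntegral.integral_of_le (halt k)]
    have h2 := key (a k) r (hapos k) (halt k)
    have h3 : 0 ≤ F (a k) := hFnn _ (hapos k)
    rw [le_div_iff₀ hnβα]
    nlinarith [h2, h3]
  refine ⟨hInt.mono_set Ioo_subset_Ioc_self, ?_⟩
  -- the identity
  set I : ℝ := ∫ ρ in Ioc (0:ℝ) r, g ρ * ρ ^ ((n:ℝ)-1) with hI
  set l : Filter ℝ := 𝓝[Ioo (0:ℝ) r] 0 with hldef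
  have hlne : l.NeBot := by
    rw [hldef]
    refine mem_closure_iff_nhdsWithin_neBot.mp ?_
    rw [closure_Ioo hr.ne]
    exact left_mem_Icc.mpr hr.le
  have hIcc : IntegrableOn (fun ρ => g ρ * ρ ^ ((n:ℝ)-1)) (Icc 0 r) :=
    (integrableOn_Icc_iff_integrableOn_Ioc enorm_ne_top).mpr hInt
  have hprim : Tendsto (fun x => ∫ t in Ioc (0:ℝ) x, g t * t ^ ((n:ℝ)-1)) l (𝓝 0) := by
    have hc := intervalIntegral.continuousOn_primitive hIcc
    have h0 : ContinuousWithinAt (fun x => ∫ t in Ioc (0:ℝ) x, g t * t ^ ((n:ℝ)-1))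
        (Icc 0 r) 0 := hc 0 (left_mem_Icc.mpr hr.le)
    have h0' : Tendsto (fun x => ∫ t in Ioc (0:ℝ) x, g t * t ^ ((n:ℝ)-1))
        (𝓝[Icc (0:ℝ) r] 0) (𝓝 (∫ t in Ioc (0:ℝ) (0:ℝ), g t * t ^ ((n:ℝ)-1))) := h0
    have hz : (∫ t in Ioc (0:ℝ) (0:ℝ), g t * t ^ ((n:ℝ)-1)) = 0 := by simp
    rw [hz] at h0'
    exact h0'.mono_left (nhdsWithin_mono 0 Ioo_subset_Icc_self)
  have hFl : Tendsto F l (𝓝 0) :=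
    hF0.mono_left (nhdsWithin_mono 0 fun x hx => hx.1)
  have hlim2 : Tendsto (fun a => F r - ((n:ℝ)*β - α) *
      (I - ∫ x in Ioc (0:ℝ) a, g x * x ^ ((n:ℝ)-1))) l
      (𝓝 (F r - ((n:ℝ)*β - α) * (I - 0))) :=
    tendsto_const_nhds.sub ((tendsto_const_nhds.sub hprim).const_mul _)
  have heq : ∀ᶠ a in l, F r - ((n:ℝ)*β - α) *
      (I - ∫ x in Ioc (0:ℝ) a, g x * x ^ ((n:ℝ)-1)) = F a := by
    filter_upwards [self_mem_nhdsWithin] with a ha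
    have h2 := key a r ha.1 ha.2.le
    rw [intervalIntegral.integral_of_le ha.2.le] at h2
    have hsplit : I = (∫ x in Ioc (0:ℝ) a, g x * x ^ ((n:ℝ)-1))
        + ∫ x in Ioc a r, g x * x ^ ((n:ℝ)-1) := by
      rw [hI, ← setIntegral_union (Ioc_disjoint_Ioc_of_le le_rfl) measurableSet_Ioc
        (hInt.mono_set (Ioc_subset_Ioc_right ha.2.le))
        (hInt.mono_set (Ioc_subset_Ioc_left ha.1.le)),
        Ioc_union_Ioc_eq_Ioc ha.1.le ha.2.le]
    have h4 : I - (∫ x in Ioc (0:ℝ) a, g x * x ^ ((n:ℝ)-1))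
        = ∫ x in Ioc a r, g x * x ^ ((n:ℝ)-1) := by linarith
    rw [h4]
    linarith
  have hfin : F r - ((n:ℝ)*β - α) * (I - 0) = 0 :=
    tendsto_nhds_unique (Filter.Tendsto.congr' heq hlim2) hFl
  rw [sub_zero] at hfin
  have hFr : F r = ((n:ℝ)*β - α) * I := by linarith
  rw [← MeasureTheory.integral_Ioc_eq_integral_Ioo]
  rw [hFdef] at hFr
  exact hFr
end
end

section
/- Let n ≥ 3 be an integer, 0 < m < (n-2)/n, ρ₁ > 0, λ > 0, β = β₁ = ρ₁/(n-2-nm) and α = (2β+ρ₁)/(1-m) (so that nβ = α). Let g_λ be a radially symmetric solution of Δv^m + αv + βx·∇v = 0, v > 0, in ℝ^n∖{0} satisfying lim_{r→0+} r^{α/β} g_λ(r) = λ^{-ρ₁/((1-m)β)}. Then r^{n-1}(g_λ^m)'(r) + β r^n g_λ(r) = β λ^{-ρ₁/((1-m)β)} for all r > 0. -/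
open Real Filter Set

noncomputable section

lemma aux_rpow_atTop' {p : ℝ} (hp : p < 0) :
    Tendsto (fun r : ℝ => r ^ p) (nhdsWithin 0 (Ioi 0)) atTop := by
  have h := (tendsto_rpow_atTop (neg_pos.2 hp)).comp tendsto_inv_nhdsGT_zero
  refine h.congr' ?_
  filter_upwards [self_mem_nhdsWithin] with r hr
  have hr' : (0:ℝ) < r := hr
  show (r⁻¹) ^ (-p) = r ^ p
  rw [Real.inv_rpow hr'.le, ← Real.rpow_neg hr'.le, neg_neg]

lemma aux_rpow_zero {p : ℝ} (hp : 0 < p) :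
    Tendsto (fun r : ℝ => r ^ p) (nhdsWithin 0 (Ioi 0)) (nhds 0) := by
  have h := (aux_rpow_atTop' (neg_neg_iff_pos.2 hp)).inv_tendsto_atTop
  refine h.congr' ?_
  filter_upwards [self_mem_nhdsWithin] with r hr
  have hr' : (0:ℝ) < r := hr
  show (r ^ (-p))⁻¹ = r ^ p
  rw [Real.rpow_neg hr'.le, inv_inv]

lemma aux_upper (N : ℝ) (hN : 3 ≤ N) (h : ℝ → ℝ) (r₀ a : ℝ) (hr₀ : 0 < r₀)
    (hdiff : ∀ x ∈ Ioi (0:ℝ), DifferentiableAt ℝ h x)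
    (hbound : ∀ x ∈ Ioo (0:ℝ) r₀, a * x ^ (1-N) ≤ deriv h x) :
    ∃ C, ∀ r ∈ Ioc (0:ℝ) (r₀/2), h r ≤ C - a/(N-2) * r ^ (2-N) := by
  have hN2 : (0:ℝ) < N - 2 := by linarith
  set r₁ := r₀/2 with hr₁def
  have hr₁ : 0 < r₁ := by positivity
  have hr₁r₀ : r₁ < r₀ := by simp [hr₁def]; linarith
  set ψ : ℝ → ℝ := fun x => h x + a/(N-2) * x ^ (2-N) with hψ
  have hψdiff : ∀ x ∈ Ioi (0:ℝ), HasDerivAt ψ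
      (deriv h x + a/(N-2) * ((2-N) * x ^ (2-N-1))) x := by
    intro x hx
    exact ((hdiff x hx).hasDerivAt).add
      ((Real.hasDerivAt_rpow_const (p := 2-N) (Or.inl (ne_of_gt hx))).const_mul (a/(N-2)))
  have hmono : MonotoneOn ψ (Ioc 0 r₁) := by
    apply monotoneOn_of_deriv_nonneg (convex_Ioc 0 r₁)
    · intro x hx
      exact ((hψdiff x hx.1).continuousAt).continuousWithinAt
    · rw [interior_Ioc]
      intro x hx
      exact ((hψdiff x hx.1).differentiableAt).differentiableWithinAt
    · rw [interior_Ioc]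
      intro x hx
      rw [(hψdiff x hx.1).deriv]
      have hx0 : (0:ℝ) < x := hx.1
      have e1 : x ^ (2-N-1) = x ^ (1-N) := by rw [show (2:ℝ)-N-1 = 1-N by ring]
      have e2 : a/(N-2) * ((2-N) * x ^ (1-N)) = -(a * x ^ (1-N)) := by
        field_simp
        ring
      have := hbound x ⟨hx.1, lt_trans hx.2 hr₁r₀⟩
      rw [e1, e2]
      linarith
  refine ⟨ψ r₁, fun r hr => ?_⟩
  have := hmono hr ⟨hr₁, le_refl r₁⟩ hr.2
  simp only [hψ] at this
  linarith

lemma aux_lower (N : ℝ) (hN : 3 ≤ N) (h : ℝ → ℝ) (r₀ a : ℝ) (hr₀ : 0 < r₀)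
    (hdiff : ∀ x ∈ Ioi (0:ℝ), DifferentiableAt ℝ h x)
    (hbound : ∀ x ∈ Ioo (0:ℝ) r₀, deriv h x ≤ a * x ^ (1-N)) :
    ∃ C, ∀ r ∈ Ioc (0:ℝ) (r₀/2), C - a/(N-2) * r ^ (2-N) ≤ h r := by
  obtain ⟨C, hC⟩ := aux_upper N hN (fun x => -h x) r₀ (-a) hr₀
    (fun x hx => (hdiff x hx).neg)
    (by
      intro x hx
      have : deriv (fun x => -h x) x = -deriv h x := by
        simp [deriv.neg]
      rw [this]
      have := hbound x hx
      linarith)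
  refine ⟨-C, fun r hr => ?_⟩
  have := hC r hr
  have e : (-a)/(N-2) = -(a/(N-2)) := by ring
  rw [e] at this
  linarith

/-- for `β = β₁ = ρ₁/(n-2-nm)` (so `nβ = α`), the singular solution with
the prescribed blow-up rate satisfies
`r^{n-1}(g^m)'(r) + β rⁿ g(r) = β λ^{-ρ₁/((1-m)β)}` for all `r > 0`. -/
theorem stmt9 (n : ℕ) (m ρ₁ lam β α : ℝ)
    (hn : 3 ≤ n) (hm : 0 < m) (hm2 : m < ((n : ℝ) - 2) / n)
    (hρ : 0 < ρ₁) (hlam : 0 < lam)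
    (hβ : β = ρ₁ / ((n : ℝ) - 2 - n * m))
    (hα : α = (2 * β + ρ₁) / (1 - m))
    (g : ℝ → ℝ)
    (hg : IsSingularSolution n m α β g)
    (hlim : Tendsto (fun r => r ^ (α / β) * g r) (nhdsWithin 0 (Ioi 0))
      (nhds (lam ^ (-(ρ₁ / ((1 - m) * β)))))) :
    ∀ r > 0,
      r ^ ((n : ℝ) - 1) * deriv (fun x => g x ^ m) r + β * r ^ (n : ℝ) * g r =
        β * lam ^ (-(ρ₁ / ((1 - m) * β))) := by
  obtain ⟨hpos, hsmooth, hode⟩ := hg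
  set N := (n : ℝ) with hNdef
  have hN3 : (3:ℝ) ≤ N := by rw [hNdef]; exact_mod_cast hn
  have hNpos : (0:ℝ) < N := by linarith
  have hnm : m * N < N - 2 := (lt_div_iff₀ hNpos).1 hm2
  have hm1 : m < 1 := by
    have hmN : m * N < N := by linarith
    exact (mul_lt_iff_lt_one_left hNpos).1 hmN
  have h1m : (0:ℝ) < 1 - m := by linarith
  have hden : (0:ℝ) < N - 2 - N * m := by
    have e : m * N = N * m := mul_comm m N
    linarith
  have hβpos : 0 < β := hβ ▸ div_pos hρ hden
  have hβne : β ≠ 0 := ne_of_gt hβpos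
  have hρeq : ρ₁ = β * (N - 2 - N * m) := by rw [hβ]; field_simp
  have hαβ : α = N * β := by rw [hα, hρeq]; field_simp; ring
  set L := lam ^ (-(ρ₁ / ((1 - m) * β))) with hLdef
  have hLpos : 0 < L := Real.rpow_pos_of_pos hlam _
  set h : ℝ → ℝ := fun x => g x ^ m with hhdef
  have hCg : ContDiffOn ℝ (⊤:ℕ∞) g (Ioi 0) := hsmooth
  have hCh : ContDiffOn ℝ (⊤:ℕ∞) h (Ioi 0) := by
    intro x hx
    exact ((Real.contDiffAt_rpow_const_of_ne (ne_of_gt (hpos x hx))).comp x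
      (hCg.contDiffAt (isOpen_Ioi.mem_nhds hx))).contDiffWithinAt
  have hdh : ∀ x ∈ Ioi (0:ℝ), DifferentiableAt ℝ h x := fun x hx =>
    (hCh.differentiableOn (by simp)).differentiableAt (isOpen_Ioi.mem_nhds hx)
  have hCh' : ContDiffOn ℝ (⊤:ℕ∞) (deriv h) (Ioi 0) :=
    hCh.deriv_of_isOpen isOpen_Ioi (by simp)
  have hddh : ∀ x ∈ Ioi (0:ℝ), DifferentiableAt ℝ (deriv h) x := fun x hx =>
    (hCh'.differentiableOn (by simp)).differentiableAt (isOpen_Ioi.mem_nhds hx)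
  have hdg : ∀ x ∈ Ioi (0:ℝ), DifferentiableAt ℝ g x := fun x hx =>
    (hCg.differentiableOn (by simp)).differentiableAt (isOpen_Ioi.mem_nhds hx)
  set F : ℝ → ℝ := fun x => x ^ (N-1) * deriv h x + β * x ^ N * g x with hFdef
  have hF' : ∀ r ∈ Ioi (0:ℝ), HasDerivAt F 0 r := by
    intro r hr
    have hr0 : (0:ℝ) < r := hr
    have p1 : HasDerivAt (fun x : ℝ => x ^ (N-1)) ((N-1) * r ^ (N-1-1)) r :=
      Real.hasDerivAt_rpow_const (Or.inl (ne_of_gt hr0))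
    have p3 : HasDerivAt (fun x : ℝ => x ^ N) (N * r ^ (N-1)) r :=
      Real.hasDerivAt_rpow_const (Or.inl (ne_of_gt hr0))
    have p2 : HasDerivAt (deriv h) (deriv (deriv h) r) r := (hddh r hr).hasDerivAt
    have p4 : HasDerivAt g (deriv g r) r := (hdg r hr).hasDerivAt
    have hFd : HasDerivAt F
        ((((N-1) * r ^ (N-1-1)) * deriv h r + r ^ (N-1) * deriv (deriv h) r)
          + ((β * (N * r ^ (N-1))) * g r + (β * r ^ N) * deriv g r)) r :=
      (p1.mul p2).add ((p3.const_mul β).mul p4)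
    convert hFd using 1
    have ode := hode r hr0
    rw [hαβ] at ode
    have hA : r ^ (N-1-1) = r ^ (N-1) / r := by
      have := Real.rpow_sub hr0 (N-1) 1
      rwa [Real.rpow_one] at this
    have hB : r ^ N = r ^ (N-1) * r := by
      have := Real.rpow_add hr0 (N-1) 1
      rw [Real.rpow_one] at this
      rw [show N-1+1 = N by ring] at this
      exact this
    rw [hA, hB]
    linear_combination (-(r ^ (N-1))) * ode
  have hkey : ∀ s r : ℝ, 0 < s → s ≤ r → F r = F s := by
    intro s r hs hsr
    have := constant_of_has_deriv_right_zero (f := F) (a := s) (b := r)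
      (fun x hx => ((hF' x (lt_of_lt_of_le hs hx.1)).continuousAt).continuousWithinAt)
      (fun x hx => (hF' x (lt_of_lt_of_le hs hx.1)).hasDerivWithinAt)
    exact this r ⟨hsr, le_refl r⟩
  have hc : ∀ r > (0:ℝ), F r = F 1 := by
    intro r hr
    rcases le_total r 1 with h1 | h1
    · exact (hkey r 1 hr h1).symm
    · exact hkey 1 r one_pos h1
  set c := F 1 with hcdef
  set d := c - β * L with hddef
  have hab : α / β = N := by rw [hαβ]; field_simp
  rw [hab] at hlim
  have htd : Tendsto (fun r => r ^ (N-1) * deriv h r) (nhdsWithin 0 (Ioi 0)) (nhds d) := by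
    have h2 : Tendsto (fun r => c - β * (r ^ N * g r)) (nhdsWithin (0:ℝ) (Ioi 0))
        (nhds (c - β * L)) := tendsto_const_nhds.sub (hlim.const_mul β)
    rw [← hddef] at h2
    refine h2.congr' ?_
    filter_upwards [self_mem_nhdsWithin] with r hr
    have hFr := hc r hr
    simp only [hFdef] at hFr
    linarith
  have hd0 : d = 0 := by
    rcases lt_trichotomy d 0 with hd | hd | hd
    · exfalso
      have ev1 : ∀ᶠ r in nhdsWithin (0:ℝ) (Ioi 0), r ^ (N-1) * deriv h r < d/2 :=
        htd.eventually (eventually_lt_nhds (by linarith))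
      have ev2 : ∀ᶠ r in nhdsWithin (0:ℝ) (Ioi 0), r ^ N * g r < L + 1 :=
        hlim.eventually (eventually_lt_nhds (by linarith))
      obtain ⟨u, hu, hsub⟩ := mem_nhdsGT_iff_exists_Ioo_subset.1 (ev1.and ev2)
      have hu0 : (0:ℝ) < u := hu
      have hb : ∀ x ∈ Ioo (0:ℝ) u, deriv h x ≤ (d/2) * x ^ (1-N) := by
        intro x hx
        have hx0 : (0:ℝ) < x := hx.1
        have hxp : (0:ℝ) < x ^ (N-1) := Real.rpow_pos_of_pos hx0 _
        have e : x ^ (1-N) = (x ^ (N-1))⁻¹ := by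
          rw [← Real.rpow_neg hx0.le, show -(N-1) = 1-N by ring]
        rw [e, ← div_eq_mul_inv, le_div_iff₀ hxp]
        have h1 : x ^ (N-1) * deriv h x < d/2 := (hsub hx).1
        have hcomm := mul_comm (deriv h x) (x ^ (N-1))
        linarith
      obtain ⟨C, hC⟩ := aux_lower N hN3 h u (d/2) hu0 hdh hb
      set E := -((d/2)/(N-2)) with hEdef
      have hN2 : (0:ℝ) < N - 2 := by linarith
      have hE : 0 < E := by
        have : (d/2)/(N-2) < 0 := div_neg_of_neg_of_pos (by linarith) hN2
        simp only [hEdef]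
        linarith
      have hC' : ∀ r ∈ Ioc (0:ℝ) (u/2), C + E * r ^ (2-N) ≤ h r := by
        intro r hr
        have h1 := hC r hr
        have e : C - (d/2)/(N-2) * r ^ (2-N) = C + E * r ^ (2-N) := by
          rw [hEdef]; ring
        linarith [e ▸ h1]
      set M := (L+1) ^ m with hMdef
      have hM : 0 < M := Real.rpow_pos_of_pos (by linarith) m
      have hub : ∀ r ∈ Ioo (0:ℝ) u, h r ≤ M * r ^ (-(N*m)) := by
        intro r hr
        have hr0 : (0:ℝ) < r := hr.1
        have h1 : r ^ N * g r < L + 1 := (hsub hr).2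
        have hrN : (0:ℝ) < r ^ N := Real.rpow_pos_of_pos hr0 _
        have hg' : g r ≤ (L+1) * r ^ (-N) := by
          rw [Real.rpow_neg hr0.le, ← div_eq_mul_inv, le_div_iff₀ hrN]
          have hcomm := mul_comm (g r) (r ^ N)
          linarith
        have h2 : h r ≤ ((L+1) * r ^ (-N)) ^ m :=
          Real.rpow_le_rpow (le_of_lt (hpos r hr0)) hg' hm.le
        calc h r ≤ ((L+1) * r ^ (-N)) ^ m := h2
          _ = M * r ^ (-(N*m)) := by
              rw [Real.mul_rpow (by linarith) (Real.rpow_nonneg hr0.le _),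
                ← Real.rpow_mul hr0.le, show (-N)*m = -(N*m) by ring]
      have evA : ∀ᶠ r in nhdsWithin (0:ℝ) (Ioi 0), r ∈ Ioc (0:ℝ) (u/2) := by
        have hmem : Ioo (0:ℝ) (u/2) ∈ nhdsWithin (0:ℝ) (Ioi 0) :=
          Ioo_mem_nhdsGT_of_mem ⟨le_refl 0, by positivity⟩
        filter_upwards [hmem] with r hr
        exact ⟨hr.1, hr.2.le⟩
      have evB : ∀ᶠ r in nhdsWithin (0:ℝ) (Ioi 0), r ^ (N-2-N*m) ≤ E/(2*M) :=
        (aux_rpow_zero (by linarith : (0:ℝ) < N-2-N*m)).eventually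
          (eventually_le_nhds (by positivity))
      have evC : ∀ᶠ r in nhdsWithin (0:ℝ) (Ioi 0), 0 < C + (E/2) * r ^ (2-N) := by
        have ht := (aux_rpow_atTop' (by linarith : (2:ℝ)-N < 0)).const_mul_atTop
          (by positivity : (0:ℝ) < E/2)
        filter_upwards [ht.eventually_gt_atTop (-C)] with r hr
        linarith
      obtain ⟨r, hr1, hr2, hr3⟩ := (evA.and (evB.and evC)).exists
      have hr0 : (0:ℝ) < r := hr1.1
      have hru : r ∈ Ioo (0:ℝ) u := ⟨hr0, lt_of_le_of_lt hr1.2 (by linarith)⟩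
      have h2N : (0:ℝ) < r ^ (2-N) := Real.rpow_pos_of_pos hr0 _
      have hsplit : r ^ (-(N*m)) = r ^ (2-N) * r ^ (N-2-N*m) := by
        rw [← Real.rpow_add hr0, show (2-N) + (N-2-N*m) = -(N*m) by ring]
      have hkey2 : M * r ^ (-(N*m)) ≤ (E/2) * r ^ (2-N) := by
        rw [hsplit]
        calc M * (r ^ (2-N) * r ^ (N-2-N*m)) = (M * r ^ (N-2-N*m)) * r ^ (2-N) := by ring
          _ ≤ (M * (E/(2*M))) * r ^ (2-N) := by
              apply mul_le_mul_of_nonneg_right _ h2N.le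
              exact mul_le_mul_of_nonneg_left hr2 hM.le
          _ = (E/2) * r ^ (2-N) := by field_simp
      have hlow := hC' r hr1
      have hup := hub r hru
      have hfin : C + E * r ^ (2-N) ≤ E/2 * r ^ (2-N) :=
        le_trans hlow (le_trans hup hkey2)
      clear_value E M
      nlinarith [hfin, hr3, hE, h2N]
    · exact hd
    · exfalso
      have ev1 : ∀ᶠ r in nhdsWithin (0:ℝ) (Ioi 0), d/2 < r ^ (N-1) * deriv h r :=
        htd.eventually (eventually_gt_nhds (by linarith))
      obtain ⟨u, hu, hsub⟩ := mem_nhdsGT_iff_exists_Ioo_subset.1 ev1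
      have hu0 : (0:ℝ) < u := hu
      have hb : ∀ x ∈ Ioo (0:ℝ) u, (d/2) * x ^ (1-N) ≤ deriv h x := by
        intro x hx
        have hx0 : (0:ℝ) < x := hx.1
        have hxp : (0:ℝ) < x ^ (N-1) := Real.rpow_pos_of_pos hx0 _
        have e : x ^ (1-N) = (x ^ (N-1))⁻¹ := by
          rw [← Real.rpow_neg hx0.le, show -(N-1) = 1-N by ring]
        rw [e, ← div_eq_mul_inv, div_le_iff₀ hxp]
        have h1 : d/2 < x ^ (N-1) * deriv h x := hsub hx
        have hcomm := mul_comm (deriv h x) (x ^ (N-1))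
        linarith
      obtain ⟨C, hC⟩ := aux_upper N hN3 h u (d/2) hu0 hdh hb
      set E := (d/2)/(N-2) with hEdef
      have hN2 : (0:ℝ) < N - 2 := by linarith
      have hE : 0 < E := by positivity
      have evA : ∀ᶠ r in nhdsWithin (0:ℝ) (Ioi 0), r ∈ Ioc (0:ℝ) (u/2) := by
        have hmem : Ioo (0:ℝ) (u/2) ∈ nhdsWithin (0:ℝ) (Ioi 0) :=
          Ioo_mem_nhdsGT_of_mem ⟨le_refl 0, by positivity⟩
        filter_upwards [hmem] with r hr
        exact ⟨hr.1, hr.2.le⟩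
      have evC : ∀ᶠ r in nhdsWithin (0:ℝ) (Ioi 0), C < E * r ^ (2-N) := by
        have ht := (aux_rpow_atTop' (by linarith : (2:ℝ)-N < 0)).const_mul_atTop hE
        exact ht.eventually_gt_atTop C
      obtain ⟨r, hr1, hr2⟩ := (evA.and evC).exists
      have hr0 : (0:ℝ) < r := hr1.1
      have hhr : 0 < h r := Real.rpow_pos_of_pos (hpos r hr0) m
      have := hC r hr1
      linarith
  intro r hr
  have h1 := hc r hr
  simp only [hFdef] at h1
  have h2 : c = β * L := by
    have := hd0
    rw [hddef] at this
    linarith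
  rw [h1, h2]
end
end

section
/- Let n ≥ 3 be an integer, 0 < m < (n-2)/n, ρ₁ > 0, β ≥ β₁ = ρ₁/(n-2-nm), α = (2β+ρ₁)/(1-m), and λ₂ > λ₁ > 0. For i = 1,2 let g_{λ_i} be a radially symmetric solution of Δv^m + αv + βx·∇v = 0, v > 0, in ℝ^n∖{0} satisfying lim_{r→0+} r^{α/β} g_{λ_i}(r) = λ_i^{-ρ₁/((1-m)β)}. Then g_{λ₂}(r) < g_{λ₁}(r) for all r > 0. -/
open Real Filter Set Topology

noncomputable section

private lemma sol_derivs (m : ℝ) (g : ℝ → ℝ)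
    (hpos : ∀ r > 0, 0 < g r) (hs : ContDiffOn ℝ (⊤ : ℕ∞) g (Ioi 0)) :
    ∀ r > 0, HasDerivAt g (deriv g r) r ∧
      HasDerivAt (fun x => g x ^ m) (deriv (fun x => g x ^ m) r) r ∧
      HasDerivAt (deriv fun x => g x ^ m) (deriv (deriv fun x => g x ^ m) r) r := by
  have h1 : ((⊤ : ℕ∞) : WithTop ℕ∞) ≠ 0 := by
    exact_mod_cast (WithTop.top_ne_zero : (⊤:ℕ∞) ≠ 0)
  have hgm : ContDiffOn ℝ (⊤ : ℕ∞) (fun x => g x ^ m) (Ioi 0) := fun x hx =>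
    ((hs.contDiffAt (Ioi_mem_nhds hx)).rpow_const_of_ne
      (ne_of_gt (hpos x hx))).contDiffWithinAt
  have hgm' : ContDiffOn ℝ (⊤ : ℕ∞) (deriv fun x => g x ^ m) (Ioi 0) :=
    hgm.deriv_of_isOpen isOpen_Ioi (by exact_mod_cast (le_top : ((⊤:ℕ∞)+1 : ℕ∞) ≤ ⊤))
  intro r hr
  exact ⟨((hs.contDiffAt (Ioi_mem_nhds hr)).differentiableAt h1).hasDerivAt,
    ((hgm.contDiffAt (Ioi_mem_nhds hr)).differentiableAt h1).hasDerivAt,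
    ((hgm'.contDiffAt (Ioi_mem_nhds hr)).differentiableAt h1).hasDerivAt⟩

set_option maxHeartbeats 2000000 in
/-- comparison of singular solutions: if `λ₂ > λ₁ > 0` then
`g_{λ₂}(r) < g_{λ₁}(r)` for all `r > 0`. -/
theorem stmt11 (n : ℕ) (m ρ₁ lam₁ lam₂ β α : ℝ)
    (hn : 3 ≤ n) (hm : 0 < m) (hm2 : m < ((n : ℝ) - 2) / n)
    (hρ : 0 < ρ₁) (hlam₁ : 0 < lam₁) (hlam₂ : lam₁ < lam₂)
    (hβ : β ≥ ρ₁ / ((n : ℝ) - 2 - n * m))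
    (hα : α = (2 * β + ρ₁) / (1 - m))
    (g₁ g₂ : ℝ → ℝ)
    (hg₁ : IsSingularSolution n m α β g₁)
    (hg₂ : IsSingularSolution n m α β g₂)
    (hlim₁ : Tendsto (fun r => r ^ (α / β) * g₁ r) (nhdsWithin 0 (Ioi 0))
      (nhds (lam₁ ^ (-(ρ₁ / ((1 - m) * β))))))
    (hlim₂ : Tendsto (fun r => r ^ (α / β) * g₂ r) (nhdsWithin 0 (Ioi 0))
      (nhds (lam₂ ^ (-(ρ₁ / ((1 - m) * β)))))) :
    ∀ r > 0, g₂ r < g₁ r := by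
  obtain ⟨hg₁pos, hg₁s, hode₁⟩ := hg₁
  obtain ⟨hg₂pos, hg₂s, hode₂⟩ := hg₂
  have hd₁ := sol_derivs m g₁ hg₁pos hg₁s
  have hd₂ := sol_derivs m g₂ hg₂pos hg₂s
  -- numerics
  have hnR : (3:ℝ) ≤ (n:ℝ) := by exact_mod_cast hn
  have hn0 : (0:ℝ) < (n:ℝ) := by linarith
  have hmn : m * (n:ℝ) < (n:ℝ) - 2 := (lt_div_iff₀ hn0).mp hm2
  have hnm : 0 < (n:ℝ) - 2 - n * m := by linarith
  have hm1 : m < 1 := by nlinarith [hmn, hn0]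
  have h1m : (0:ℝ) < 1 - m := by linarith
  have hβpos : 0 < β := lt_of_lt_of_le (div_pos hρ hnm) hβ
  have hρβ : ρ₁ ≤ β * ((n:ℝ) - 2 - n * m) := by
    rw [ge_iff_le, div_le_iff₀ hnm] at hβ; linarith
  have hαpos : 0 < α := by rw [hα]; positivity
  have hαn : α ≤ n * β := by rw [hα, div_le_iff₀ h1m]; nlinarith [hρβ]
  set p : ℝ := α / β with hp
  have hppos : 0 < p := div_pos hαpos hβpos
  have hpn : p ≤ (n:ℝ) := by rw [hp, div_le_iff₀ hβpos]; linarith [hαn]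
  have hmp : m * p < (n:ℝ) - 2 := by nlinarith [hpn, hmn, hm.le, hppos.le]
  set e : ℝ := ρ₁ / ((1 - m) * β) with he
  have hepos : 0 < e := by rw [he]; positivity
  have hlam₂' : 0 < lam₂ := lt_trans hlam₁ hlam₂
  set L₁ : ℝ := lam₁ ^ (-e) with hL₁
  set L₂ : ℝ := lam₂ ^ (-e) with hL₂
  have hL₁pos : 0 < L₁ := rpow_pos_of_pos hlam₁ _
  have hL₂pos : 0 < L₂ := rpow_pos_of_pos hlam₂' _
  have hLlt : L₂ < L₁ := by
    rw [hL₁, hL₂, Real.rpow_neg hlam₁.le, Real.rpow_neg hlam₂'.le]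
    exact inv_strictAnti₀ (rpow_pos_of_pos hlam₁ e) (Real.rpow_lt_rpow hlam₁.le hlam₂ hepos)
  -- limit of the difference
  have hlimd : Tendsto (fun r => r ^ p * (g₁ r - g₂ r)) (𝓝[>] (0:ℝ)) (𝓝 (L₁ - L₂)) := by
    have := hlim₁.sub hlim₂
    simpa [mul_sub] using this
  -- near 0, g₁ > g₂
  obtain ⟨ε, hεpos, hε⟩ : ∃ ε > 0, ∀ r, 0 < r → r < ε → 0 < g₁ r - g₂ r := by
    have h1 : ∀ᶠ r in 𝓝[>] (0:ℝ), 0 < r ^ p * (g₁ r - g₂ r) :=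
      hlimd.eventually (eventually_gt_nhds (by linarith))
    obtain ⟨u, hu0, hsub⟩ := mem_nhdsGT_iff_exists_Ioo_subset.mp h1
    refine ⟨u, hu0, fun r hr hru => ?_⟩
    have h2 : 0 < r ^ p * (g₁ r - g₂ r) := hsub ⟨hr, hru⟩
    by_contra hnot; push_neg at hnot
    have := mul_nonpos_of_nonneg_of_nonpos (rpow_pos_of_pos hr p).le hnot
    linarith
  by_contra hcon
  push_neg at hcon
  obtain ⟨r', hr'pos, hr'le⟩ := hcon
  set S : Set ℝ := {r | 0 < r ∧ g₁ r ≤ g₂ r} with hS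
  have hSne : S.Nonempty := ⟨r', hr'pos, hr'le⟩
  have hSbd : BddBelow S := ⟨0, fun x hx => hx.1.le⟩
  set r₀ : ℝ := sInf S with hr₀
  have hεle : ε ≤ r₀ := by
    refine le_csInf hSne (fun b hb => ?_)
    by_contra hh; push_neg at hh
    have := hε b hb.1 hh
    linarith [hb.2]
  have hr₀pos : 0 < r₀ := lt_of_lt_of_le hεpos hεle
  have hltr₀ : ∀ s, 0 < s → s < r₀ → g₂ s < g₁ s := by
    intro s hs hsr
    have hnotS : s ∉ S := notMem_of_lt_csInf hsr hSbd
    by_contra hh; push_neg at hh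
    exact hnotS ⟨hs, hh⟩
  have hcont₁ : ContinuousAt g₁ r₀ := (hd₁ r₀ hr₀pos).1.differentiableAt.continuousAt
  have hcont₂ : ContinuousAt g₂ r₀ := (hd₂ r₀ hr₀pos).1.differentiableAt.continuousAt
  have hge : g₁ r₀ ≤ g₂ r₀ := by
    by_contra hh; push_neg at hh
    have hcd : ContinuousAt (fun r => g₁ r - g₂ r) r₀ := hcont₁.sub hcont₂
    have hev : ∀ᶠ x in 𝓝 r₀, 0 < g₁ x - g₂ x :=
      hcd.eventually (eventually_gt_nhds (sub_pos.mpr hh))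
    obtain ⟨η, hηpos, hball⟩ := Metric.eventually_nhds_iff_ball.mp hev
    have hlb : ∀ x ∈ S, r₀ + η ≤ x := by
      intro x hx
      by_contra hxx; push_neg at hxx
      have hxr₀ : r₀ ≤ x := csInf_le hSbd hx
      have : x ∈ Metric.ball r₀ η := by
        rw [Metric.mem_ball, Real.dist_eq, abs_lt]
        constructor <;> linarith
      have := hball x this
      linarith [hx.2]
    have : r₀ + η ≤ r₀ := le_csInf hSne hlb
    linarith
  have hle2 : g₂ r₀ ≤ g₁ r₀ := by
    have hcd : ContinuousAt (fun r => g₁ r - g₂ r) r₀ := hcont₁.sub hcont₂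
    have ht : Tendsto (fun r => g₁ r - g₂ r) (𝓝[<] r₀) (𝓝 (g₁ r₀ - g₂ r₀)) :=
      hcd.tendsto.mono_left nhdsWithin_le_nhds
    have hev : ∀ᶠ x in 𝓝[<] r₀, 0 ≤ g₁ x - g₂ x := by
      filter_upwards [Ioo_mem_nhdsLT_of_mem (⟨hr₀pos, le_refl r₀⟩ : r₀ ∈ Ioc 0 r₀)] with x hx
      exact (sub_pos.mpr (hltr₀ x hx.1 hx.2)).le
    have := ge_of_tendsto ht hev
    linarith
  have heq : g₁ r₀ = g₂ r₀ := le_antisymm hge hle2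
  -- derivative bookkeeping
  set A₁ : ℝ → ℝ := deriv (fun x => g₁ x ^ m) with hA₁d
  set A₂ : ℝ → ℝ := deriv (fun x => g₂ x ^ m) with hA₂d
  set Q : ℝ → ℝ := fun r => A₁ r - A₂ r with hQd
  set q : ℝ → ℝ := fun r => g₁ r ^ m - g₂ r ^ m with hqd
  have hq' : ∀ r, 0 < r → HasDerivAt q (Q r) r := by
    intro r hr
    have := ((hd₁ r hr).2.1).sub ((hd₂ r hr).2.1)
    rw [hqd, hQd]; exact this
  have hQ' : ∀ r, 0 < r → HasDerivAt Q (deriv A₁ r - deriv A₂ r) r := by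
    intro r hr
    have := ((hd₁ r hr).2.2).sub ((hd₂ r hr).2.2)
    rw [hQd]; exact this
  set F : ℝ → ℝ := fun r => r ^ ((n:ℝ) - 1) * Q r with hFd
  set G : ℝ → ℝ := fun r => F r + β * r ^ ((n:ℝ)) * (g₁ r - g₂ r) with hGd
  clear_value A₁ A₂ Q q F G
  have hG' : ∀ r, 0 < r →
      HasDerivAt G (((n:ℝ) * β - α) * r ^ ((n:ℝ)-1) * (g₁ r - g₂ r)) r := by
    intro r hr
    have hrne : r ≠ 0 := ne_of_gt hr
    have h1 : HasDerivAt (fun x : ℝ => x ^ ((n:ℝ)-1)) (((n:ℝ)-1) * r ^ ((n:ℝ)-1-1)) r :=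
      Real.hasDerivAt_rpow_const (Or.inl hrne)
    have h2 : HasDerivAt (fun x : ℝ => x ^ ((n:ℝ))) ((n:ℝ) * r ^ ((n:ℝ)-1)) r :=
      Real.hasDerivAt_rpow_const (Or.inl hrne)
    have hF : HasDerivAt F
        (((n:ℝ)-1) * r ^ ((n:ℝ)-1-1) * Q r + r ^ ((n:ℝ)-1) * (deriv A₁ r - deriv A₂ r)) r := by
      rw [hFd]; exact h1.mul (hQ' r hr)
    have hdgd : HasDerivAt (fun x => g₁ x - g₂ x) (deriv g₁ r - deriv g₂ r) r :=
      ((hd₁ r hr).1).sub ((hd₂ r hr).1)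
    have hsecond : HasDerivAt (fun x => β * x ^ ((n:ℝ)) * (g₁ x - g₂ x))
        ((β * ((n:ℝ) * r ^ ((n:ℝ)-1))) * (g₁ r - g₂ r)
          + β * r ^ ((n:ℝ)) * (deriv g₁ r - deriv g₂ r)) r :=
      (h2.const_mul β).mul hdgd
    have hsum := hF.add hsecond
    have hGg : G = fun x => F x + β * x ^ ((n:ℝ)) * (g₁ x - g₂ x) := hGd
    rw [hGg]
    refine HasDerivAt.congr_deriv hsum ?_
    have hode₁' := hode₁ r hr
    have hode₂' := hode₂ r hr
    have hB₁ : deriv A₁ r = -((((n:ℝ)-1)/r) * A₁ r + α * g₁ r + β * r * deriv g₁ r) := by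
      linarith
    have hB₂ : deriv A₂ r = -((((n:ℝ)-1)/r) * A₂ r + α * g₂ r + β * r * deriv g₂ r) := by
      linarith
    rw [hB₁, hB₂, hQd]
    have e1 : r ^ ((n:ℝ)-1) = r ^ ((n:ℝ)-1-1) * r := by
      rw [← Real.rpow_add_one hrne]; congr 1; ring
    have e2 : r ^ ((n:ℝ)) = r ^ ((n:ℝ)-1) * r := by
      rw [← Real.rpow_add_one hrne]; congr 1; ring
    rw [e2, e1]
    field_simp
    ring
  -- q facts
  have hq0 : q r₀ = 0 := by rw [hqd]; simp [heq]
  have hqpos : ∀ s, 0 < s → s < r₀ → 0 < q s := by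
    intro s hs hsr
    have h2 := hg₂pos s hs
    have := Real.rpow_lt_rpow h2.le (hltr₀ s hs hsr) hm
    rw [hqd]; simpa using sub_pos.mpr this
  have hQr₀ : Q r₀ ≤ 0 := by
    have hd : HasDerivWithinAt q (Q r₀) (Iio r₀) r₀ := (hq' r₀ hr₀pos).hasDerivWithinAt
    rw [hasDerivWithinAt_iff_tendsto_slope] at hd
    have hIio : (Iio r₀ \ {r₀}) = Iio r₀ :=
      diff_singleton_eq_self (by simp)
    rw [hIio] at hd
    refine le_of_tendsto hd ?_
    filter_upwards [Ioo_mem_nhdsLT_of_mem (⟨hr₀pos, le_refl r₀⟩ : r₀ ∈ Ioc 0 r₀)] with s hs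
    have hqs := hqpos s hs.1 hs.2
    have hsl : slope q r₀ s = q s / (s - r₀) := by
      rw [slope_def_field, hq0]; ring_nf
    rw [hsl]
    exact le_of_lt (div_neg_of_pos_of_neg hqs (by linarith [hs.2]))
  have hFr₀ : F r₀ ≤ 0 := by
    rw [hFd]
    exact mul_nonpos_of_nonneg_of_nonpos (rpow_pos_of_pos hr₀pos _).le hQr₀
  have hGr₀ : G r₀ ≤ 0 := by
    rw [hGd]
    simp only [heq, sub_self, mul_zero, add_zero]
    exact hFr₀
  -- monotonicity of G
  have hGmono : ∀ s t, 0 < s → s ≤ t → t ≤ r₀ → G s ≤ G t := by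
    intro s t hs hst htr
    have hco : ContinuousOn G (Icc s t) := fun x hx =>
      ((hG' x (lt_of_lt_of_le hs hx.1)).differentiableAt.continuousAt).continuousWithinAt
    have hdiff : DifferentiableOn ℝ G (interior (Icc s t)) := by
      rw [interior_Icc]
      exact fun x hx => ((hG' x (lt_trans hs hx.1)).differentiableAt).differentiableWithinAt
    have hderiv : ∀ x ∈ interior (Icc s t), 0 ≤ deriv G x := by
      rw [interior_Icc]
      intro x hx
      have hx0 : 0 < x := lt_trans hs hx.1
      rw [(hG' x hx0).deriv]
      have hdgx : 0 ≤ g₁ x - g₂ x :=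
        (sub_pos.mpr (hltr₀ x hx0 (lt_of_lt_of_le hx.2 htr))).le
      have h1 : 0 ≤ (n:ℝ) * β - α := by linarith
      positivity
    exact monotoneOn_of_deriv_nonneg (convex_Icc s t) hco hdiff hderiv
      ⟨le_refl s, hst⟩ ⟨hst, le_refl t⟩ hst
  -- δ construction
  obtain ⟨δ, hδpos, s₁, hs₁pos, hs₁lt, hFs⟩ :
      ∃ δ, 0 < δ ∧ ∃ s₁, 0 < s₁ ∧ s₁ < r₀ ∧ ∀ s, 0 < s → s ≤ s₁ → F s ≤ -δ := by
    rcases eq_or_lt_of_le hαn with hceq | hclt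
    · -- α = n β
      have hpn' : p = (n:ℝ) := by
        rw [hp, hceq]; field_simp
      have hlim3 : Tendsto (fun s => β * s ^ ((n:ℝ)) * (g₁ s - g₂ s)) (𝓝[>] (0:ℝ))
          (𝓝 (β * (L₁ - L₂))) := by
        have := hlimd.const_mul β
        rw [hpn'] at this
        simpa [mul_assoc] using this
      have hev : ∀ᶠ s in 𝓝[>] (0:ℝ),
          β * (L₁ - L₂)/2 < β * s ^ ((n:ℝ)) * (g₁ s - g₂ s) :=
        hlim3.eventually (eventually_gt_nhds (by nlinarith [mul_pos hβpos (sub_pos.mpr hLlt)]))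
      obtain ⟨u, hu0, hsub⟩ := mem_nhdsGT_iff_exists_Ioo_subset.mp hev
      have hupos : (0:ℝ) < u := hu0
      refine ⟨β * (L₁ - L₂)/2, half_pos (mul_pos hβpos (sub_pos.mpr hLlt)), min (u/2) (r₀/2), by positivity, ?_, ?_⟩
      · exact lt_of_le_of_lt (min_le_right _ _) (by linarith)
      · intro s hs hss
        have hsu : s < u := lt_of_le_of_lt (le_trans hss (min_le_left _ _)) (by linarith)
        have h2 : β * (L₁ - L₂)/2 < β * s ^ ((n:ℝ)) * (g₁ s - g₂ s) := hsub ⟨hs, hsu⟩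
        have h3 : G s ≤ G r₀ := hGmono s r₀ hs
          (le_trans hss (le_of_lt (lt_of_le_of_lt (min_le_right _ _) (by linarith)))) (le_refl _)
        have h4 : G s = F s + β * s ^ ((n:ℝ)) * (g₁ s - g₂ s) := by rw [hGd]
        linarith
    · -- α < n β : strict monotonicity
      have hGs : G (r₀/2) < G r₀ := by
        have hco : ContinuousOn G (Icc (r₀/2) r₀) := fun x hx =>
          ((hG' x (lt_of_lt_of_le (by linarith) hx.1)).differentiableAt.continuousAt).continuousWithinAt
        have hderiv : ∀ x ∈ interior (Icc (r₀/2) r₀), 0 < deriv G x := by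
          rw [interior_Icc]
          intro x hx
          have hx0 : 0 < x := lt_trans (by linarith) hx.1
          rw [(hG' x hx0).deriv]
          have hdgx : 0 < g₁ x - g₂ x := sub_pos.mpr (hltr₀ x hx0 hx.2)
          have h1 : 0 < (n:ℝ) * β - α := by linarith
          positivity
        exact strictMonoOn_of_deriv_pos (convex_Icc _ _) hco hderiv
          ⟨le_refl _, by linarith⟩ ⟨by linarith, le_refl _⟩ (by linarith)
      refine ⟨G r₀ - G (r₀/2), by linarith, r₀/2, by linarith, by linarith,
        fun s hs hss => ?_⟩
      have h1 : G s ≤ G (r₀/2) := hGmono s (r₀/2) hs hss (by linarith)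
      have h2 : 0 ≤ β * s ^ ((n:ℝ)) * (g₁ s - g₂ s) := by
        have hdgx : 0 ≤ g₁ s - g₂ s := (sub_pos.mpr (hltr₀ s hs (by linarith))).le
        positivity
      have h3 : G s = F s + β * s ^ ((n:ℝ)) * (g₁ s - g₂ s) := by rw [hGd]
      linarith [hGr₀]
  -- the barrier function
  set C : ℝ := δ / ((n:ℝ) - 2) with hC
  have hCpos : 0 < C := div_pos hδpos (by linarith)
  set H : ℝ → ℝ := fun s => q s - C * s ^ (2 - (n:ℝ)) with hH
  clear_value C H
  have hH' : ∀ s, 0 < s →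
      HasDerivAt H (Q s - C * ((2-(n:ℝ)) * s ^ (2-(n:ℝ)-1))) s := by
    intro s hs
    rw [hH]
    exact (hq' s hs).sub ((Real.hasDerivAt_rpow_const (Or.inl (ne_of_gt hs))).const_mul C)
  have hH'le : ∀ s, 0 < s → s ≤ s₁ → Q s - C * ((2-(n:ℝ)) * s ^ (2-(n:ℝ)-1)) ≤ 0 := by
    intro s hs hss
    have hFs' := hFs s hs hss
    have hx : (0:ℝ) < s ^ ((n:ℝ)-1) := rpow_pos_of_pos hs _
    have hprod : s ^ ((n:ℝ)-1) * s ^ (2-(n:ℝ)-1) = 1 := by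
      rw [← Real.rpow_add hs]
      have h8 : ((n:ℝ) - 1 + (2 - (n:ℝ) - 1)) = 0 := by ring
      rw [h8, Real.rpow_zero]
    have hFeq : s ^ ((n:ℝ)-1) * Q s = F s := by rw [hFd]
    have hCexp : C * ((n:ℝ) - 2) = δ := by
      rw [hC]; exact div_mul_cancel₀ δ (by linarith)
    have key : s ^ ((n:ℝ)-1) * (Q s - C * ((2-(n:ℝ)) * s ^ (2-(n:ℝ)-1))) ≤ 0 := by
      have expand : s ^ ((n:ℝ)-1) * (Q s - C * ((2-(n:ℝ)) * s ^ (2-(n:ℝ)-1)))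
          = F s - C * (2-(n:ℝ)) * (s ^ ((n:ℝ)-1) * s ^ (2-(n:ℝ)-1)) := by
        rw [← hFeq]; ring
      rw [expand, hprod, mul_one]
      have h9 : C * (2 - (n:ℝ)) = -δ := by linear_combination -hCexp
      rw [h9]
      linarith [hFs']
    by_contra hpos2; push_neg at hpos2
    exact absurd key (not_le.mpr (mul_pos hx hpos2))
  have hHanti : ∀ s, 0 < s → s ≤ s₁ → H s₁ ≤ H s := by
    intro s hs hss
    have hco : ContinuousOn H (Icc s s₁) := fun x hx =>
      ((hH' x (lt_of_lt_of_le hs hx.1)).differentiableAt.continuousAt).continuousWithinAt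
    have hdiff : DifferentiableOn ℝ H (interior (Icc s s₁)) := by
      rw [interior_Icc]
      exact fun x hx => ((hH' x (lt_trans hs hx.1)).differentiableAt).differentiableWithinAt
    have hderiv : ∀ x ∈ interior (Icc s s₁), deriv H x ≤ 0 := by
      rw [interior_Icc]
      intro x hx
      have hx0 : 0 < x := lt_trans hs hx.1
      rw [(hH' x hx0).deriv]
      exact hH'le x hx0 hx.2.le
    exact antitoneOn_of_deriv_nonpos (convex_Icc s s₁) hco hdiff hderiv
      ⟨le_refl s, hss⟩ ⟨hss, le_refl s₁⟩ hss
  set K : ℝ := H s₁ with hK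
  have hlower : ∀ s, 0 < s → s ≤ s₁ → C + K * s ^ ((n:ℝ)-2) ≤ q s * s ^ ((n:ℝ)-2) := by
    intro s hs hss
    have h1 : K ≤ q s - C * s ^ (2-(n:ℝ)) := by
      have := hHanti s hs hss
      rw [hH] at this
      exact this
    have h2 : (0:ℝ) < s ^ ((n:ℝ)-2) := rpow_pos_of_pos hs _
    have h3 : s ^ (2-(n:ℝ)) * s ^ ((n:ℝ)-2) = 1 := by
      rw [← Real.rpow_add hs]; norm_num
    have h4 : (q s - C * s ^ (2-(n:ℝ))) * s ^ ((n:ℝ)-2) = q s * s ^ ((n:ℝ)-2) - C := by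
      rw [sub_mul, mul_assoc, h3, mul_one]
    linarith [mul_le_mul_of_nonneg_right h1 h2.le, h4]
  have hupper : ∀ s, 0 < s →
      q s * s ^ ((n:ℝ)-2) ≤ (s ^ p * g₁ s) ^ m * s ^ ((n:ℝ)-2-m*p) := by
    intro s hs
    have h2 : (0:ℝ) < s ^ ((n:ℝ)-2) := rpow_pos_of_pos hs _
    have hq_le : q s ≤ g₁ s ^ m := by
      have h3 : 0 < g₂ s ^ m := rpow_pos_of_pos (hg₂pos s hs) m
      rw [hqd]; simp only []
      linarith
    have hident : (s ^ p * g₁ s) ^ m * s ^ ((n:ℝ)-2-m*p) = g₁ s ^ m * s ^ ((n:ℝ)-2) := by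
      rw [Real.mul_rpow (rpow_pos_of_pos hs p).le (hg₁pos s hs).le, ← Real.rpow_mul hs.le]
      have : s ^ (p * m) * g₁ s ^ m * s ^ ((n:ℝ)-2-m*p)
          = g₁ s ^ m * (s ^ (p*m) * s ^ ((n:ℝ)-2-m*p)) := by ring
      rw [this, ← Real.rpow_add hs]
      congr 2
      ring
    rw [hident]
    exact mul_le_mul_of_nonneg_right hq_le h2.le
  have hup0 : Tendsto (fun s => (s ^ p * g₁ s) ^ m * s ^ ((n:ℝ)-2-m*p)) (𝓝[>] (0:ℝ))
      (𝓝 0) := by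
    have ht1 : Tendsto (fun s => (s ^ p * g₁ s) ^ m) (𝓝[>] (0:ℝ)) (𝓝 (L₁ ^ m)) :=
      hlim₁.rpow_const (Or.inl (ne_of_gt hL₁pos))
    have ht2 : Tendsto (fun s : ℝ => s ^ ((n:ℝ)-2-m*p)) (𝓝[>] (0:ℝ)) (𝓝 0) := by
      have hc : ContinuousAt (fun s : ℝ => s ^ ((n:ℝ)-2-m*p)) 0 :=
        Real.continuousAt_rpow_const 0 _ (Or.inr (by linarith))
      have := hc.tendsto.mono_left (nhdsWithin_le_nhds : 𝓝[>] (0:ℝ) ≤ 𝓝 0)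
      simpa [Real.zero_rpow (show ((n:ℝ)-2-m*p) ≠ 0 by linarith)] using this
    have := ht1.mul ht2
    simpa using this
  have hev1 : ∀ᶠ s in 𝓝[>] (0:ℝ), (s ^ p * g₁ s) ^ m * s ^ ((n:ℝ)-2-m*p) < C/4 :=
    hup0.eventually_lt_const (by linarith)
  have hKlim : Tendsto (fun s : ℝ => K * s ^ ((n:ℝ)-2)) (𝓝[>] (0:ℝ)) (𝓝 0) := by
    have hc : ContinuousAt (fun s : ℝ => s ^ ((n:ℝ)-2)) 0 :=
      Real.continuousAt_rpow_const 0 _ (Or.inr (by linarith))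
    have := (hc.tendsto.mono_left (nhdsWithin_le_nhds : 𝓝[>] (0:ℝ) ≤ 𝓝 0)).const_mul K
    simpa [Real.zero_rpow (show ((n:ℝ)-2) ≠ 0 by linarith)] using this
  have hev2 : ∀ᶠ s in 𝓝[>] (0:ℝ), -(C/4) < K * s ^ ((n:ℝ)-2) :=
    hKlim.eventually (eventually_gt_nhds (by linarith))
  have hev3 : ∀ᶠ s in 𝓝[>] (0:ℝ), s ∈ Ioc 0 s₁ :=
    Ioc_mem_nhdsGT_of_mem ⟨le_refl (0:ℝ), hs₁pos⟩
  obtain ⟨s, h1, h2, h3⟩ := (hev1.and (hev2.and hev3)).exists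
  have hl := hlower s h3.1 h3.2
  have hu := hupper s h3.1
  linarith

end
end

section
/- Let n ≥ 3 be an integer, 0 < m < (n-2)/n, ρ₁ > 0, β ≥ β₁ = ρ₁/(n-2-nm) and α = (2β+ρ₁)/(1-m). (i) If λ₂ > λ₁ > 0 and v_{λ₁}, v_{λ₂} are radially symmetric solutions of Δv^m + αv + βx·∇v = 0, v > 0, in ℝ^n with v_{λ_i}(0) = λ_i, then v_{λ₁}(r) < v_{λ₂}(r) for all r ≥ 0. (ii) If λ > 0, v_λ is a radially symmetric solution in ℝ^n with v_λ(0) = λ, and g_λ is a radially symmetric solution in ℝ^n∖{0} with lim_{r→0+} r^{α/β} g_λ(r) = λ^{-ρ₁/((1-m)β)}, then v_λ(r) < (C_*/r²)^{1/(1-m)} < g_λ(r) for all r > 0, where C_* = 2m(n-2-nm)/((1-m)ρ₁). -/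
set_option maxHeartbeats 1000000


open Real Filter Set
open Topology

noncomputable section

/-- A radially symmetric solution of `Δ v^m + α v + β x·∇v = 0`, `v > 0`, in `ℝⁿ`
with `v(0) = lam`. -/
def IsRegularSolution (n : ℕ) (m α β lam : ℝ) (v : ℝ → ℝ) : Prop :=
  ContinuousOn v (Ici 0) ∧ (∀ r, 0 ≤ r → 0 < v r) ∧
    ContDiffOn ℝ (⊤ : ℕ∞) v (Ioi 0) ∧ v 0 = lam ∧
    Tendsto (fun r => r ^ ((n : ℝ) - 1) * deriv (fun x => v x ^ m) r)
      (nhdsWithin 0 (Ioi 0)) (nhds 0) ∧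
    ∀ r > 0,
      deriv (deriv (fun x => v x ^ m)) r
        + (((n : ℝ) - 1) / r) * deriv (fun x => v x ^ m) r
        + α * v r + β * r * deriv v r = 0

namespace Stmt12Aux

/-- The "flux" function `h(r) = r^(n-1) (u^m)'(r) + β r^n u(r)`. -/
def HF (n : ℕ) (m β : ℝ) (u : ℝ → ℝ) : ℝ → ℝ :=
  fun r => r ^ (n - 1) * deriv (fun x => u x ^ m) r + β * r ^ n * u r

/-- Package of facts about a positive solution on `(0,∞)`. -/
structure SolOK (n : ℕ) (m α β : ℝ) (u : ℝ → ℝ) : Prop where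
  pos : ∀ r, 0 < r → 0 < u r
  cont : ∀ r, 0 < r → ContinuousAt u r
  uderiv : ∀ r, 0 < r → HasDerivAt u (deriv u r) r
  wderiv : ∀ r, 0 < r → HasDerivAt (fun x => u x ^ m) (deriv u r * m * u r ^ (m - 1)) r
  wdcont : ContinuousOn (deriv (fun x => u x ^ m)) (Ioi 0)
  hH : ∀ r, 0 < r → HasDerivAt (HF n m β u) (((n : ℝ) * β - α) * r ^ (n - 1) * u r) r

theorem SolOK.wderiv_eq {n : ℕ} {m α β : ℝ} {u : ℝ → ℝ} (s : SolOK n m α β u)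
    {r : ℝ} (hr : 0 < r) :
    deriv (fun x => u x ^ m) r = deriv u r * m * u r ^ (m - 1) :=
  (s.wderiv r hr).deriv

theorem solOK_of_ode {n : ℕ} {m α β : ℝ} {u : ℝ → ℝ} (hn : 3 ≤ n) (hm : 0 < m)
    (hpos : ∀ r > 0, 0 < u r) (hcd : ContDiffOn ℝ (⊤ : ℕ∞) u (Ioi 0))
    (hode : ∀ r > 0, deriv (deriv (fun x => u x ^ m)) r
        + (((n : ℝ) - 1) / r) * deriv (fun x => u x ^ m) r
        + α * u r + β * r * deriv u r = 0) :
    SolOK n m α β u := by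
  have hmem : ∀ r : ℝ, 0 < r → Ioi (0:ℝ) ∈ 𝓝 r := fun r hr => isOpen_Ioi.mem_nhds hr
  have hat : ∀ r, 0 < r → ContDiffAt ℝ (⊤ : ℕ∞) u r := fun r hr => hcd.contDiffAt (hmem r hr)
  have hud : ∀ r, 0 < r → HasDerivAt u (deriv u r) r := fun r hr =>
    ((hat r hr).differentiableAt (by simp)).hasDerivAt
  have hwd : ∀ r, 0 < r → HasDerivAt (fun x => u x ^ m) (deriv u r * m * u r ^ (m - 1)) r :=
    fun r hr => (hud r hr).rpow_const (Or.inl (hpos r hr).ne')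
  have hwcd : ContDiffOn ℝ (⊤ : ℕ∞) (fun x => u x ^ m) (Ioi 0) :=
    hcd.rpow_const_of_ne fun x hx => (hpos x hx).ne'
  have hdwcd : ContDiffOn ℝ (⊤ : ℕ∞) (deriv (fun x => u x ^ m)) (Ioi 0) :=
    hwcd.deriv_of_isOpen isOpen_Ioi (by simp)
  refine ⟨fun r hr => hpos r hr, fun r hr => (hat r hr).continuousAt, hud, hwd,
    hdwcd.continuousOn, ?_⟩
  intro r hr
  have hdw2 : HasDerivAt (deriv (fun x => u x ^ m)) (deriv (deriv (fun x => u x ^ m)) r) r :=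
    (((hdwcd.contDiffAt (hmem r hr)).differentiableAt (by simp))).hasDerivAt
  obtain ⟨k, rfl⟩ : ∃ k, n = k + 3 := ⟨n - 3, by omega⟩
  have e1 : k + 3 - 1 = k + 2 := by omega
  have e2 : (k + 2) - 1 = k + 1 := by omega
  have h1 : HasDerivAt (fun x : ℝ => x ^ (k + 2)) (((k:ℝ) + 2) * r ^ (k + 1)) r := by
    simpa [e2] using hasDerivAt_pow (k + 2) r
  have h2 : HasDerivAt (fun x : ℝ => x ^ (k + 3)) (((k:ℝ) + 3) * r ^ (k + 2)) r := by
    simpa [e1] using hasDerivAt_pow (k + 3) r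
  have hsum := (h1.mul hdw2).add ((h2.mul (hud r hr)).const_mul β)
  have hfun : HF (k + 3) m β u
      = fun x => x ^ (k + 2) * deriv (fun y => u y ^ m) x + β * (x ^ (k + 3) * u x) := by
    funext x; simp only [HF, e1]; ring
  rw [hfun]
  refine hsum.congr_deriv ?_
  have hode' := hode r hr
  have hdd : deriv (deriv fun x => u x ^ m) r
      = -((((k : ℝ) + 3) - 1) / r * deriv (fun x => u x ^ m) r + α * u r + β * r * deriv u r) := by
    push_cast at hode' ⊢; linarith
  rw [hdd]
  field_simp
  push_cast
  ring

theorem SolOK.contOn {n : ℕ} {m α β : ℝ} {u : ℝ → ℝ} (s : SolOK n m α β u)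
    {t : Set ℝ} (ht : t ⊆ Ioi 0) : ContinuousOn u t :=
  fun x hx => ((s.cont x (ht hx)).continuousWithinAt)

theorem HF_identity {n : ℕ} {m α β : ℝ} {u : ℝ → ℝ} (s : SolOK n m α β u)
    {a b : ℝ} (ha : 0 < a) (hab : a ≤ b) :
    HF n m β u b - HF n m β u a = ∫ x in a..b, ((n : ℝ) * β - α) * x ^ (n - 1) * u x := by
  have hIcc : Set.uIcc a b = Set.Icc a b := uIcc_of_le hab
  have hsub : Set.uIcc a b ⊆ Ioi 0 := by
    rw [hIcc]; intro x hx; exact lt_of_lt_of_le ha hx.1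
  refine (intervalIntegral.integral_eq_sub_of_hasDerivAt
      (fun x hx => s.hH x (hsub hx)) ?_).symm
  exact (((continuous_const.mul (continuous_pow _)).continuousOn).mul
    (s.contOn hsub)).intervalIntegrable

theorem HF_mono {n : ℕ} {m α β : ℝ} {u : ℝ → ℝ} (s : SolOK n m α β u)
    (hαβ : 0 ≤ (n : ℝ) * β - α) {a b : ℝ} (ha : 0 < a) (hab : a ≤ b) :
    HF n m β u a ≤ HF n m β u b := by
  have h := HF_identity s ha hab
  have : 0 ≤ ∫ x in a..b, ((n : ℝ) * β - α) * x ^ (n - 1) * u x := by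
    refine intervalIntegral.integral_nonneg hab fun x hx => ?_
    have hx0 : 0 < x := lt_of_lt_of_le ha hx.1
    exact mul_nonneg (mul_nonneg hαβ (pow_nonneg hx0.le _)) (s.pos x hx0).le
  linarith

/-- if the derivative is positive, values just to the left are smaller. -/
theorem left_lt_of_deriv_pos {f : ℝ → ℝ} {x d : ℝ} (hf : HasDerivAt f d x) (hd : 0 < d) :
    ∀ᶠ r in 𝓝[<] x, f r < f x := by
  have h1 : Tendsto (slope f x) (𝓝[≠] x) (𝓝 d) := hasDerivAt_iff_tendsto_slope.mp hf
  have h2 : ∀ᶠ r in 𝓝[≠] x, 0 < slope f x r := h1.eventually (eventually_gt_nhds hd)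
  have h3 : ∀ᶠ r in 𝓝[<] x, 0 < slope f x r :=
    h2.filter_mono (nhdsWithin_mono x fun r hr => ne_of_lt hr)
  filter_upwards [h3, self_mem_nhdsWithin] with r hr hrx
  have hrx' : r - x < 0 := sub_neg.mpr hrx
  have h4 : 0 < (f r - f x) / (r - x) := by
    have := hr; rwa [slope_def_field] at this
  rcases div_pos_iff.mp h4 with ⟨h5, h6⟩ | ⟨h5, h6⟩
  · linarith
  · linarith

theorem SolOK.intInt {n : ℕ} {m α β : ℝ} {u : ℝ → ℝ} (s : SolOK n m α β u) (C : ℝ)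
    {p q : ℝ} (hp : 0 < p) (hpq : p ≤ q) :
    IntervalIntegrable (fun x => C * x ^ (n - 1) * u x) MeasureTheory.volume p q := by
  have hsub : Set.uIcc p q ⊆ Ioi 0 := by
    rw [uIcc_of_le hpq]; intro x hx; exact lt_of_lt_of_le hp hx.1
  exact (((continuous_const.mul (continuous_pow _)).continuousOn).mul
    (s.contOn hsub)).intervalIntegrable

/-- The comparison engine: strict case `nβ - α > 0`. -/
theorem cmp {n : ℕ} {m α β : ℝ} {u₁ u₂ : ℝ → ℝ} (hm : 0 < m)
    (hαβ : 0 < (n : ℝ) * β - α)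
    (s₁ : SolOK n m α β u₁) (s₂ : SolOK n m α β u₂)
    (hδ : ∃ δ > 0, ∀ r, 0 < r → r < δ → u₁ r < u₂ r)
    (hlim : ∀ ε > 0, ∀ R > 0, ∃ a, 0 < a ∧ a < R ∧ -ε < HF n m β u₂ a - HF n m β u₁ a) :
    ∀ r, 0 < r → u₁ r < u₂ r := by
  by_contra hcon
  push_neg at hcon
  obtain ⟨r₁, hr₁, hle⟩ := hcon
  obtain ⟨δ, hδ0, hδlt⟩ := hδ
  set f : ℝ → ℝ := fun r => u₂ r - u₁ r with hfdef
  have hδ₀pos : 0 < min δ r₁ / 2 := by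
    have := lt_min hδ0 hr₁; positivity
  set δ₀ : ℝ := min δ r₁ / 2 with hδ₀def
  have hδ₀δ : δ₀ < δ := by
    have h1 : min δ r₁ ≤ δ := min_le_left _ _
    have := lt_min hδ0 hr₁
    rw [hδ₀def]; linarith
  have hδ₀r₁ : δ₀ < r₁ := by
    have h1 : min δ r₁ ≤ r₁ := min_le_right _ _
    have := lt_min hδ0 hr₁
    rw [hδ₀def]; linarith
  have hfδ₀ : 0 < f δ₀ := sub_pos.mpr (hδlt δ₀ hδ₀pos hδ₀δ)
  set S : Set ℝ := {r | δ₀ ≤ r ∧ f r ≤ 0} with hSdef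
  have hS_closed : IsClosed S := by
    have hc : ContinuousOn f (Ici δ₀) := by
      intro x hx
      have hx0 : 0 < x := lt_of_lt_of_le hδ₀pos hx
      exact ((s₂.cont x hx0).sub (s₁.cont x hx0)).continuousWithinAt
    have hrw : S = Ici δ₀ ∩ f ⁻¹' (Iic 0) := by
      ext x; simp [hSdef, mem_Ici, mem_Iic]
    rw [hrw]
    exact hc.preimage_isClosed_of_isClosed isClosed_Ici isClosed_Iic
  have hS_ne : S.Nonempty := ⟨r₁, le_of_lt hδ₀r₁, sub_nonpos.mpr hle⟩
  have hS_bdd : BddBelow S := ⟨δ₀, fun x hx => hx.1⟩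
  set r₀ := sInf S with hr₀def
  have hr₀S : r₀ ∈ S := hS_closed.csInf_mem hS_ne hS_bdd
  have hr₀δ₀ : δ₀ ≤ r₀ := hr₀S.1
  have hr₀pos : 0 < r₀ := lt_of_lt_of_le hδ₀pos hr₀δ₀
  have hbefore : ∀ r, δ₀ ≤ r → r < r₀ → 0 < f r := by
    intro r h1 h2
    by_contra h; push_neg at h
    exact absurd (csInf_le hS_bdd ⟨h1, h⟩) (not_le.mpr h2)
  have hδ₀lt : δ₀ < r₀ := by
    rcases lt_or_eq_of_le hr₀δ₀ with h | h
    · exact h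
    · exfalso; rw [← h] at hr₀S; have := hr₀S.2; linarith
  have hf0 : f r₀ = 0 := by
    have hcont : ContinuousAt f r₀ := (s₂.cont r₀ hr₀pos).sub (s₁.cont r₀ hr₀pos)
    have ht : Tendsto f (𝓝[<] r₀) (𝓝 (f r₀)) := hcont.tendsto.mono_left nhdsWithin_le_nhds
    have hev : ∀ᶠ r in 𝓝[<] r₀, 0 ≤ f r := by
      filter_upwards [Ioo_mem_nhdsLT hδ₀lt] with r hr
      exact (hbefore r hr.1.le hr.2).le
    exact le_antisymm hr₀S.2 (ge_of_tendsto ht hev)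
  have hV : u₁ r₀ = u₂ r₀ := by
    have : u₂ r₀ - u₁ r₀ = 0 := hf0
    linarith
  -- positive middle integral
  have hMint : IntervalIntegrable
      (fun x => ((n:ℝ)*β - α) * x ^ (n-1) * u₂ x - ((n:ℝ)*β - α) * x ^ (n-1) * u₁ x)
      MeasureTheory.volume δ₀ r₀ :=
    (s₂.intInt _ hδ₀pos hδ₀lt.le).sub (s₁.intInt _ hδ₀pos hδ₀lt.le)
  set M : ℝ := ∫ x in δ₀..r₀,
      (((n:ℝ)*β - α) * x ^ (n-1) * u₂ x - ((n:ℝ)*β - α) * x ^ (n-1) * u₁ x) with hMdef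
  have hM : 0 < M := by
    refine intervalIntegral.intervalIntegral_pos_of_pos_on hMint (fun x hx => ?_) hδ₀lt
    have hx0 : 0 < x := lt_trans hδ₀pos hx.1
    have hfx : 0 < u₂ x - u₁ x := hbefore x hx.1.le hx.2
    have hxp : 0 < x ^ (n-1) := pow_pos hx0 _
    have h2 : ((n:ℝ)*β - α) * x ^ (n-1) * u₂ x - ((n:ℝ)*β - α) * x ^ (n-1) * u₁ x
        = ((n:ℝ)*β - α) * x ^ (n-1) * (u₂ x - u₁ x) := by ring
    rw [h2]
    exact mul_pos (mul_pos hαβ hxp) hfx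
  obtain ⟨a, ha0, haδ₀, haHF⟩ := hlim (M/2) (by positivity) δ₀ hδ₀pos
  have har₀ : a ≤ r₀ := le_of_lt (lt_trans haδ₀ hδ₀lt)
  have hid₁ := HF_identity s₁ ha0 har₀
  have hid₂ := HF_identity s₂ ha0 har₀
  -- split the integrals at δ₀
  have hsplit₁ := intervalIntegral.integral_add_adjacent_intervals
    (s₁.intInt ((n:ℝ)*β - α) ha0 haδ₀.le) (s₁.intInt ((n:ℝ)*β - α) hδ₀pos hδ₀lt.le)
  have hsplit₂ := intervalIntegral.integral_add_adjacent_intervals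
    (s₂.intInt ((n:ℝ)*β - α) ha0 haδ₀.le) (s₂.intInt ((n:ℝ)*β - α) hδ₀pos hδ₀lt.le)
  have hlow : ∫ x in a..δ₀, ((n:ℝ)*β - α) * x ^ (n-1) * u₁ x
      ≤ ∫ x in a..δ₀, ((n:ℝ)*β - α) * x ^ (n-1) * u₂ x := by
    refine intervalIntegral.integral_mono_on haδ₀.le
      (s₁.intInt _ ha0 haδ₀.le) (s₂.intInt _ ha0 haδ₀.le) (fun x hx => ?_)
    have hx0 : 0 < x := lt_of_lt_of_le ha0 hx.1
    have hxδ : x < δ := lt_of_le_of_lt hx.2 hδ₀δ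
    have := (hδlt x hx0 hxδ).le
    have hxp : (0:ℝ) ≤ x ^ (n-1) := (pow_pos hx0 _).le
    exact mul_le_mul_of_nonneg_left this (mul_nonneg hαβ.le hxp)
  have hMeq : (∫ x in δ₀..r₀, ((n:ℝ)*β - α) * x ^ (n-1) * u₂ x)
      - (∫ x in δ₀..r₀, ((n:ℝ)*β - α) * x ^ (n-1) * u₁ x) = M := by
    rw [hMdef, intervalIntegral.integral_sub
      (s₂.intInt _ hδ₀pos hδ₀lt.le) (s₁.intInt _ hδ₀pos hδ₀lt.le)]
  have hkey : 0 < HF n m β u₂ r₀ - HF n m β u₁ r₀ := by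
    have e1 : HF n m β u₁ r₀ = HF n m β u₁ a
        + (∫ x in a..δ₀, ((n:ℝ)*β - α) * x ^ (n-1) * u₁ x)
        + (∫ x in δ₀..r₀, ((n:ℝ)*β - α) * x ^ (n-1) * u₁ x) := by
      linarith [hid₁, hsplit₁]
    have e2 : HF n m β u₂ r₀ = HF n m β u₂ a
        + (∫ x in a..δ₀, ((n:ℝ)*β - α) * x ^ (n-1) * u₂ x)
        + (∫ x in δ₀..r₀, ((n:ℝ)*β - α) * x ^ (n-1) * u₂ x) := by
      linarith [hid₂, hsplit₂]
    rw [e1, e2]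
    linarith [hMeq, hlow, haHF, hM]
  -- translate into derivative information at r₀
  have hw₁ := s₁.wderiv_eq hr₀pos
  have hw₂ := s₂.wderiv_eq hr₀pos
  have hrpow : 0 < r₀ ^ (n-1) := pow_pos hr₀pos _
  have hdw : deriv (fun x => u₁ x ^ m) r₀ < deriv (fun x => u₂ x ^ m) r₀ := by
    have : HF n m β u₂ r₀ - HF n m β u₁ r₀
        = r₀ ^ (n-1) * (deriv (fun x => u₂ x ^ m) r₀ - deriv (fun x => u₁ x ^ m) r₀) := by
      simp only [HF]; rw [hV]; ring
    rw [this] at hkey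
    rcases mul_pos_iff.mp hkey with ⟨_, h⟩ | ⟨h, _⟩
    · linarith
    · exact absurd hrpow (not_lt.mpr h.le)
  have hupos : 0 < u₁ r₀ := s₁.pos r₀ hr₀pos
  have hc' : 0 < u₁ r₀ ^ (m - 1) := Real.rpow_pos_of_pos hupos _
  have hd : 0 < deriv u₂ r₀ - deriv u₁ r₀ := by
    rw [hw₁, hw₂, ← hV] at hdw
    have h1 : deriv u₁ r₀ * m < deriv u₂ r₀ * m := lt_of_mul_lt_mul_right hdw hc'.le
    have h2 : deriv u₁ r₀ < deriv u₂ r₀ := lt_of_mul_lt_mul_right h1 hm.le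
    linarith
  have hfd : HasDerivAt f (deriv u₂ r₀ - deriv u₁ r₀) r₀ :=
    (s₂.uderiv r₀ hr₀pos).sub (s₁.uderiv r₀ hr₀pos)
  have hlt := left_lt_of_deriv_pos hfd hd
  rw [hf0] at hlt
  have hpos' : ∀ᶠ r in 𝓝[<] r₀, 0 < f r := by
    filter_upwards [Ioo_mem_nhdsLT hδ₀lt] with r hr
    exact hbefore r hr.1.le hr.2
  obtain ⟨r, h1, h2⟩ := (hlt.and hpos').exists
  linarith

theorem tendsto_rpow_zero {e : ℝ} (he : 0 < e) :
    Tendsto (fun a : ℝ => a ^ e) (𝓝[>] (0:ℝ)) (𝓝 0) := by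
  have h1 : Tendsto (fun a : ℝ => Real.exp (Real.log a * e)) (𝓝[>] (0:ℝ)) (𝓝 0) := by
    refine Real.tendsto_exp_atBot.comp ?_
    exact Tendsto.atBot_mul_const he Real.tendsto_log_nhdsGT_zero
  refine h1.congr' ?_
  filter_upwards [self_mem_nhdsWithin] with a (ha : 0 < a)
  rw [Real.rpow_def_of_pos ha]

theorem HF_nonneg {n : ℕ} {m α β : ℝ} {g : ℝ → ℝ} (hn : 3 ≤ n) (hm : 0 < m) (hβ : 0 < β)
    (hαβ : 0 ≤ (n : ℝ) * β - α) (s : SolOK n m α β g)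
    (hasym : Tendsto (fun a : ℝ => a ^ ((n:ℝ) - 2) * g a ^ m) (𝓝[>] (0:ℝ)) (𝓝 0)) :
    ∀ r, 0 < r → 0 ≤ HF n m β g r := by
  by_contra hcon
  push_neg at hcon
  obtain ⟨r₁, hr₁pos, hneg⟩ := hcon
  set c : ℝ := HF n m β g r₁ with hcdef
  have hn2 : (0:ℝ) < (n:ℝ) - 2 := by
    have : (3:ℝ) ≤ (n:ℝ) := by exact_mod_cast hn
    linarith
  have hn2' : (2:ℝ) - (n:ℝ) < 0 := by linarith
  have hcast : ((n - 1 : ℕ) : ℝ) = (n:ℝ) - 1 := by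
    have : 1 ≤ n := by omega
    push_cast [this]; ring
  -- pointwise bound on the derivative of w
  have hwb : ∀ a, 0 < a → a ≤ r₁ → deriv (fun x => g x ^ m) a ≤ c * a ^ ((1:ℝ) - n) := by
    intro a ha har
    have h1 : HF n m β g a ≤ c := HF_mono s hαβ ha har
    have h3 : 0 ≤ β * a ^ n * g a := by
      have := (s.pos a ha).le
      positivity
    have h2 : a ^ (n-1) * deriv (fun x => g x ^ m) a ≤ c := by
      simp only [HF] at h1; linarith
    have hae : a ^ ((1:ℝ) - n) = (a ^ (n-1))⁻¹ := by
      rw [← Real.rpow_natCast a (n-1), ← Real.rpow_neg ha.le]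
      congr 1
      rw [hcast]; ring
    rw [hae, ← div_eq_mul_inv, le_div_iff₀ (pow_pos ha _)]
    linarith [h2]
  -- the explicit antiderivative of c * x^(1-n)
  set φ : ℝ → ℝ := fun x => c / (2 - (n:ℝ)) * x ^ ((2:ℝ) - n) with hφdef
  have hφd : ∀ x : ℝ, 0 < x → HasDerivAt φ (c * x ^ ((1:ℝ) - n)) x := by
    intro x hx
    have h := (Real.hasDerivAt_rpow_const (x := x) (p := (2:ℝ) - n)
      (Or.inl hx.ne')).const_mul (c / (2 - (n:ℝ)))
    refine h.congr_deriv ?_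
    rw [show (2:ℝ) - (n:ℝ) - 1 = 1 - (n:ℝ) by ring]
    have hne : (2:ℝ) - (n:ℝ) ≠ 0 := ne_of_lt hn2'
    field_simp
  have hWest : ∀ a, 0 < a → a ≤ r₁ →
      g r₁ ^ m - g a ^ m ≤ φ r₁ - φ a := by
    intro a ha har
    have hsub : Set.uIcc a r₁ ⊆ Ioi 0 := by
      rw [uIcc_of_le har]; intro x hx; exact lt_of_lt_of_le ha hx.1
    have hftc : (∫ x in a..r₁, deriv (fun y => g y ^ m) x) = g r₁ ^ m - g a ^ m := by
      refine intervalIntegral.integral_eq_sub_of_hasDerivAt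
        (f := fun y => g y ^ m) (f' := deriv (fun y => g y ^ m)) (fun x hx => ?_) ?_
      · have hx0 : 0 < x := hsub hx
        have := s.wderiv x hx0
        rwa [← s.wderiv_eq hx0] at this
      · exact (s.wdcont.mono hsub).intervalIntegrable
    have hftcφ : (∫ x in a..r₁, c * x ^ ((1:ℝ) - n)) = φ r₁ - φ a := by
      refine intervalIntegral.integral_eq_sub_of_hasDerivAt (fun x hx => hφd x (hsub hx)) ?_
      refine (ContinuousOn.mul continuousOn_const ?_).intervalIntegrable
      intro x hx
      exact (Real.continuousAt_rpow_const x _ (Or.inl (ne_of_gt (hsub hx)))).continuousWithinAt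
    rw [← hftc, ← hftcφ]
    refine intervalIntegral.integral_mono_on har ((s.wdcont.mono hsub).intervalIntegrable)
      ((ContinuousOn.mul continuousOn_const fun x hx =>
        (Real.continuousAt_rpow_const x _ (Or.inl (ne_of_gt (hsub hx)))).continuousWithinAt).intervalIntegrable)
      (fun x hx => hwb x (lt_of_lt_of_le ha hx.1) hx.2)
  set c' : ℝ := c / (2 - (n:ℝ)) with hc'def
  have hc' : 0 < c' := div_pos_of_neg_of_neg hneg hn2'
  set K : ℝ := g r₁ ^ m - φ r₁ with hKdef
  have hineq : ∀ᶠ a in 𝓝[>] (0:ℝ), K * a ^ ((n:ℝ) - 2) + c' ≤ a ^ ((n:ℝ) - 2) * g a ^ m := by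
    filter_upwards [Ioo_mem_nhdsGT_of_mem (Set.mem_Ico.mpr ⟨le_refl (0:ℝ), hr₁pos⟩)] with a ha
    obtain ⟨ha0, har⟩ := ha
    have h1 := hWest a ha0 har.le
    have h2 : K + c' * a ^ ((2:ℝ) - n) ≤ g a ^ m := by
      simp only [hKdef, hφdef, hc'def] at *
      linarith
    have h3 : 0 < a ^ ((n:ℝ) - 2) := Real.rpow_pos_of_pos ha0 _
    have h4 := mul_le_mul_of_nonneg_left h2 h3.le
    have h5 : a ^ ((n:ℝ) - 2) * (K + c' * a ^ ((2:ℝ) - n))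
        = K * a ^ ((n:ℝ) - 2) + c' := by
      have h6 : a ^ ((n:ℝ) - 2) * a ^ ((2:ℝ) - n) = 1 := by
        rw [← Real.rpow_add ha0]
        norm_num
      calc a ^ ((n:ℝ) - 2) * (K + c' * a ^ ((2:ℝ) - n))
          = K * a ^ ((n:ℝ) - 2) + c' * (a ^ ((n:ℝ) - 2) * a ^ ((2:ℝ) - n)) := by ring
        _ = K * a ^ ((n:ℝ) - 2) + c' := by rw [h6, mul_one]
    rw [h5] at h4
    exact h4
  have hG : Tendsto (fun a : ℝ => K * a ^ ((n:ℝ) - 2) + c') (𝓝[>] (0:ℝ)) (𝓝 c') := by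
    have h1 := (tendsto_rpow_zero hn2).const_mul K
    have h2 := h1.add_const c'
    simpa using h2
  have : c' ≤ 0 := le_of_tendsto_of_tendsto hG hasym hineq
  linarith

theorem y_hasDeriv {n : ℕ} {m α β : ℝ} {u : ℝ → ℝ} (hn : 3 ≤ n) (hm : 0 < m)
    (s : SolOK n m α β u) {r c : ℝ} (hr : 0 < r) (hc : HF n m β u r = c) :
    HasDerivAt (fun x => u x ^ (m - 1))
      ((1 - m) * β / m * r - (1 - m) / m * (c / (r ^ (n - 1) * u r))) r := by
  have hu := s.pos r hr
  have hy : HasDerivAt (fun x => u x ^ (m - 1)) (deriv u r * (m - 1) * u r ^ (m - 1 - 1)) r :=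
    (s.uderiv r hr).rpow_const (Or.inl hu.ne')
  have hw := s.wderiv_eq hr
  have hrel : r ^ (n - 1) * (deriv u r * m * u r ^ (m - 1)) + β * r ^ n * u r = c := by
    simp only [HF] at hc; rw [hw] at hc; exact hc
  have hpow : r ^ n = r ^ (n - 1) * r := by
    rw [← pow_succ]; congr 1; omega
  rw [hpow] at hrel
  have hP : 0 < u r ^ (m - 1) := Real.rpow_pos_of_pos hu _
  have hrn : 0 < r ^ (n - 1) := pow_pos hr _
  have hdu : deriv u r = (c - β * (r ^ (n - 1) * r) * u r) / (m * u r ^ (m - 1) * r ^ (n - 1)) := by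
    rw [eq_div_iff (by positivity)]
    linarith [hrel]
  have hune : u r ≠ 0 := hu.ne'
  have hmne : m ≠ 0 := hm.ne'
  have hrne : r ^ (n - 1) ≠ 0 := hrn.ne'
  have hsplit : u r ^ (m - 1 - 1) = u r ^ (m - 1) / u r := Real.rpow_sub_one hune (m - 1)
  have hyval : deriv u r * (m - 1) * u r ^ (m - 1 - 1)
      = (1 - m) * β / m * r - (1 - m) / m * (c / (r ^ (n - 1) * u r)) := by
    rw [hsplit, hdu]
    generalize u r ^ (m - 1) = P at hP
    field_simp
    ring
  rw [← hyval]
  exact hy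

theorem HF_const_of_crit {n : ℕ} {m α β : ℝ} {u : ℝ → ℝ} (s : SolOK n m α β u)
    (hcrit : (n : ℝ) * β - α = 0) {a b : ℝ} (ha : 0 < a) (hb : 0 < b) :
    HF n m β u a = HF n m β u b := by
  have key : ∀ p q : ℝ, 0 < p → p ≤ q → HF n m β u p = HF n m β u q := by
    intro p q hp hpq
    have h := HF_identity s hp hpq
    rw [hcrit] at h
    simp at h
    linarith
  rcases le_total a b with h | h
  · exact key a b ha h
  · exact (key b a hb h).symm

theorem eq_of_deriv_zero {f : ℝ → ℝ} (hf : ∀ x : ℝ, 0 < x → HasDerivAt f 0 x)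
    {a b : ℝ} (ha : 0 < a) (hab : a ≤ b) : f b = f a := by
  have h := intervalIntegral.integral_eq_sub_of_hasDerivAt (f := f) (f' := fun _ => (0:ℝ))
    (fun x hx => by
      refine hf x ?_
      rw [uIcc_of_le hab] at hx
      exact lt_of_lt_of_le ha hx.1)
    (intervalIntegrable_const)
  simp at h
  linarith

theorem strict_decrease {f d : ℝ → ℝ} {a b : ℝ} (ha : 0 < a) (hab : a < b)
    (hf : ∀ x : ℝ, 0 < x → HasDerivAt f (d x) x) (hdcont : ContinuousOn d (Ioi 0))
    (hdneg : ∀ x : ℝ, 0 < x → d x < 0) : f b < f a := by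
  have hsub : Set.uIcc a b ⊆ Ioi 0 := by
    rw [uIcc_of_le hab.le]; intro x hx; exact lt_of_lt_of_le ha hx.1
  have h := intervalIntegral.integral_eq_sub_of_hasDerivAt (f := f) (f' := d)
    (fun x hx => hf x (hsub hx)) ((hdcont.mono hsub).intervalIntegrable)
  have hneg : (∫ x in a..b, d x) < 0 := by
    have hpos : (0:ℝ) < ∫ x in a..b, -d x := by
      refine intervalIntegral.intervalIntegral_pos_of_pos_on ?_ (fun x hx => ?_) hab
      · exact ((hdcont.mono hsub).neg).intervalIntegrable
      · have hx0 : 0 < x := lt_trans ha hx.1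
        simpa using hdneg x hx0
    have : (∫ x in a..b, -d x) = -∫ x in a..b, d x := intervalIntegral.integral_neg
    linarith
  linarith

theorem Pfun_hasDeriv (C p : ℝ) {r : ℝ} (hr : 0 < r) :
    HasDerivAt (fun x : ℝ => C * x ^ p) (C * p * r ^ (p - 1)) r := by
  have h := (Real.hasDerivAt_rpow_const (x := r) (p := p) (Or.inl hr.ne')).const_mul C
  simpa [mul_assoc] using h

/-- Construction of the explicit singular steady state as a `SolOK`. -/
theorem solOK_U {n : ℕ} {m α β b1 Cs : ℝ} (hn : 3 ≤ n) (hm : 0 < m) (hm1 : m < 1)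
    (hb1 : 0 < b1) (hCs : Cs = 2 * m / ((1 - m) * b1))
    (hc2 : ((n : ℝ) - 2 * (1 / (1 - m))) * (β - b1) = (n : ℝ) * β - α) :
    SolOK n m α β (fun r => (Cs / r ^ 2) ^ (1 / (1 - m))) ∧
      (∀ r : ℝ, 0 < r → HF n m β (fun r => (Cs / r ^ 2) ^ (1 / (1 - m))) r
        = (β - b1) * Cs ^ (1 / (1 - m)) * r ^ ((n : ℝ) - 2 * (1 / (1 - m)))) := by
  have h1m : 0 < 1 - m := by linarith
  set E : ℝ := 1 / (1 - m) with hEdef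
  have hE : 0 < E := by positivity
  have hCs0 : 0 < Cs := by rw [hCs]; positivity
  have hEid : E * (1 - m) = 1 := by rw [hEdef]; field_simp
  have hb1Cs : b1 * Cs = 2 * m * E := by rw [hCs, hEdef]; field_simp
  set U : ℝ → ℝ := fun r => (Cs / r ^ 2) ^ E with hUdef
  have hpow_eq : ∀ q x : ℝ, 0 < x → (Cs / x ^ 2) ^ q = Cs ^ q * x ^ (-(2 * q)) := by
    intro q x hx
    rw [Real.div_rpow hCs0.le (by positivity), ← Real.rpow_natCast x 2,
      ← Real.rpow_mul hx.le, div_eq_mul_inv, ← Real.rpow_neg hx.le]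
    norm_num
  have hUpos : ∀ r : ℝ, 0 < r → 0 < U r := by
    intro r hr
    exact Real.rpow_pos_of_pos (div_pos hCs0 (pow_pos hr 2)) _
  have hUev : ∀ r : ℝ, 0 < r → U =ᶠ[𝓝 r] (fun x => Cs ^ E * x ^ (-(2 * E))) := by
    intro r hr
    exact eventuallyEq_of_mem (isOpen_Ioi.mem_nhds hr) (fun x hx => hpow_eq E x hx)
  have hUd : ∀ r : ℝ, 0 < r →
      HasDerivAt U (Cs ^ E * (-(2 * E)) * r ^ (-(2 * E) - 1)) r := by
    intro r hr
    exact (Pfun_hasDeriv (Cs ^ E) (-(2 * E)) hr).congr_of_eventuallyEq (hUev r hr)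
  have hUderiv : ∀ r : ℝ, 0 < r → HasDerivAt U (deriv U r) r := by
    intro r hr
    have h2 := (hUd r hr).deriv
    rw [h2]; exact hUd r hr
  have hwev : ∀ r : ℝ, 0 < r →
      (fun x => U x ^ m) =ᶠ[𝓝 r] (fun x => Cs ^ (E * m) * x ^ (-(2 * (E * m)))) := by
    intro r hr
    refine eventuallyEq_of_mem (isOpen_Ioi.mem_nhds hr) (fun x hx => ?_)
    have hx : (0:ℝ) < x := hx
    show ((Cs / x ^ 2) ^ E) ^ m = Cs ^ (E * m) * x ^ (-(2 * (E * m)))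
    rw [← Real.rpow_mul (div_pos hCs0 (pow_pos hx 2)).le, hpow_eq (E * m) x hx]
  have hwUd : ∀ r : ℝ, 0 < r → HasDerivAt (fun x => U x ^ m)
      (Cs ^ (E * m) * (-(2 * (E * m))) * r ^ (-(2 * (E * m)) - 1)) r := by
    intro r hr
    exact (Pfun_hasDeriv _ _ hr).congr_of_eventuallyEq (hwev r hr)
  have hwUderiv : ∀ r : ℝ, 0 < r → deriv (fun x => U x ^ m) r
      = Cs ^ (E * m) * (-(2 * (E * m))) * r ^ (-(2 * (E * m)) - 1) := by
    intro r hr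
    exact (hwUd r hr).deriv
  have hcast : ((n - 1 : ℕ) : ℝ) = (n : ℝ) - 1 := by
    have : 1 ≤ n := by omega
    push_cast [this]; ring
  have hcoef : Cs ^ (E * m) * (-(2 * (E * m))) = -b1 * Cs ^ E := by
    have h1 : Cs ^ E = Cs ^ (E * m) * Cs := by
      calc Cs ^ E = Cs ^ (E * m + 1) := by rw [show E * m + 1 = E by nlinarith]
        _ = Cs ^ (E * m) * Cs ^ (1:ℝ) := Real.rpow_add hCs0 _ _
        _ = Cs ^ (E * m) * Cs := by rw [Real.rpow_one]
    rw [h1]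
    linear_combination (Cs ^ (E * m)) * hb1Cs
  -- the key formula for HF of U
  have hHFeq : ∀ r : ℝ, 0 < r →
      HF n m β U r = (β - b1) * Cs ^ E * r ^ ((n : ℝ) - 2 * E) := by
    intro r hr
    have hr1 : (r : ℝ) ^ (n - 1) = r ^ ((n : ℝ) - 1) := by
      rw [← Real.rpow_natCast r (n - 1), hcast]
    have hrn : (r : ℝ) ^ n = r ^ ((n : ℝ)) := by
      rw [← Real.rpow_natCast r n]
    have hUr : U r = Cs ^ E * r ^ (-(2 * E)) := hpow_eq E r hr
    simp only [HF]
    rw [hwUderiv r hr, hr1, hrn, hUr]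
    have e1 : r ^ ((n:ℝ) - 1) * (Cs ^ (E * m) * (-(2 * (E * m))) * r ^ (-(2 * (E * m)) - 1))
        = (Cs ^ (E * m) * (-(2 * (E * m)))) * r ^ ((n:ℝ) - 2 * E) := by
      rw [mul_comm (r ^ ((n:ℝ) - 1)), mul_assoc, ← Real.rpow_add hr]
      congr 2
      nlinarith [hEid]
    have e2 : β * r ^ ((n:ℝ)) * (Cs ^ E * r ^ (-(2 * E)))
        = (β * Cs ^ E) * r ^ ((n:ℝ) - 2 * E) := by
      rw [show β * r ^ ((n:ℝ)) * (Cs ^ E * r ^ (-(2 * E)))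
          = (β * Cs ^ E) * (r ^ ((n:ℝ)) * r ^ (-(2 * E))) by ring, ← Real.rpow_add hr,
        show (n:ℝ) + -(2 * E) = (n:ℝ) - 2 * E by ring]
    rw [e1, e2, hcoef]
    ring
  refine ⟨⟨hUpos, fun r hr => (hUd r hr).continuousAt, hUderiv,
      fun r hr => (hUderiv r hr).rpow_const (Or.inl (hUpos r hr).ne'), ?_, ?_⟩, hHFeq⟩
  · -- continuity of deriv of U^m
    refine ContinuousOn.congr (f := fun r : ℝ => Cs ^ (E * m) * (-(2 * (E * m))) * r ^ (-(2 * (E * m)) - 1)) ?_ ?_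
    · refine continuousOn_const.mul fun x hx => ?_
      exact (Real.continuousAt_rpow_const x _ (Or.inl (ne_of_gt hx))).continuousWithinAt
    · intro x hx
      exact hwUderiv x hx
  · -- the HasDerivAt of HF of U
    intro r hr
    have hHFev : HF n m β U =ᶠ[𝓝 r] (fun x => ((β - b1) * Cs ^ E) * x ^ ((n : ℝ) - 2 * E)) := by
      exact eventuallyEq_of_mem (isOpen_Ioi.mem_nhds hr) (fun x hx => hHFeq x hx)
    have hd := (Pfun_hasDeriv ((β - b1) * Cs ^ E) ((n : ℝ) - 2 * E) hr).congr_of_eventuallyEq hHFev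
    have hval : (β - b1) * Cs ^ E * ((n : ℝ) - 2 * E) * r ^ ((n : ℝ) - 2 * E - 1)
        = ((n : ℝ) * β - α) * r ^ (n - 1) * U r := by
      have hr1 : (r : ℝ) ^ (n - 1) = r ^ ((n : ℝ) - 1) := by
        rw [← Real.rpow_natCast r (n - 1), hcast]
      have hUr : U r = Cs ^ E * r ^ (-(2 * E)) := hpow_eq E r hr
      rw [hr1, hUr, show ((n : ℝ) * β - α) * r ^ ((n:ℝ) - 1) * (Cs ^ E * r ^ (-(2 * E)))
          = ((n : ℝ) * β - α) * Cs ^ E * (r ^ ((n:ℝ) - 1) * r ^ (-(2 * E))) by ring,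
        ← Real.rpow_add hr, ← hc2]
      ring_nf
    rw [← hval]
    exact hd

theorem lt_of_rpow_lt {x y p : ℝ} (hx : 0 < x) (hy : 0 < y) (hp : p < 0) (h : y ^ p < x ^ p) :
    x < y := by
  by_contra hc
  push_neg at hc
  exact absurd (Real.rpow_le_rpow_of_nonpos hy hc hp.le) (not_le.mpr h)

theorem exists_delta {P : ℝ → Prop} (h : ∀ᶠ r in 𝓝[>] (0:ℝ), P r) :
    ∃ δ > 0, ∀ r, 0 < r → r < δ → P r := by
  rw [eventually_iff, mem_nhdsGT_iff_exists_Ioo_subset] at h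
  obtain ⟨u, hu, hsub⟩ := h
  exact ⟨u, hu, fun r h1 h2 => hsub ⟨h1, h2⟩⟩

theorem exists_near {P : ℝ → Prop} (h : ∀ᶠ r in 𝓝[>] (0:ℝ), P r) {R : ℝ} (hR : 0 < R) :
    ∃ a, 0 < a ∧ a < R ∧ P a := by
  have h2 : ∀ᶠ r in 𝓝[>] (0:ℝ), P r ∧ r ∈ Ioo 0 R :=
    h.and (eventually_mem_set.mpr (Ioo_mem_nhdsGT_of_mem ⟨le_refl 0, hR⟩))
  obtain ⟨a, hPa, ha0, haR⟩ := h2.exists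
  exact ⟨a, ha0, haR, hPa⟩

theorem reg_tendsto {n : ℕ} {m α β lamv : ℝ} {v : ℝ → ℝ}
    (hreg : IsRegularSolution n m α β lamv v) :
    Tendsto v (𝓝[>] (0:ℝ)) (𝓝 lamv) := by
  have h := hreg.1 0 (self_mem_Ici)
  rw [ContinuousWithinAt, hreg.2.2.2.1] at h
  exact h.mono_left (nhdsWithin_mono 0 Ioi_subset_Ici_self)

theorem reg_HF_tendsto {n : ℕ} {m α β lamv : ℝ} {v : ℝ → ℝ} (hn : 3 ≤ n)
    (hreg : IsRegularSolution n m α β lamv v) :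
    Tendsto (HF n m β v) (𝓝[>] (0:ℝ)) (𝓝 0) := by
  have hcast : ((n - 1 : ℕ) : ℝ) = (n:ℝ) - 1 := by
    have : 1 ≤ n := by omega
    push_cast [this]; ring
  have h1 : Tendsto (fun r : ℝ => r ^ (n - 1) * deriv (fun x => v x ^ m) r)
      (𝓝[>] (0:ℝ)) (𝓝 0) := by
    refine (hreg.2.2.2.2.1).congr' ?_
    filter_upwards [self_mem_nhdsWithin] with r (hr : 0 < r)
    rw [← Real.rpow_natCast r (n - 1), hcast]
  have h2 : Tendsto (fun r : ℝ => β * r ^ n * v r) (𝓝[>] (0:ℝ)) (𝓝 0) := by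
    have h3 : Tendsto (fun r : ℝ => β * r ^ n) (𝓝[>] (0:ℝ)) (𝓝 0) := by
      have h4 : Tendsto (fun r : ℝ => β * r ^ n) (𝓝 (0:ℝ)) (𝓝 (β * 0 ^ n)) :=
        (continuous_const.mul (continuous_pow n)).tendsto 0
      have h5 : β * (0:ℝ) ^ n = 0 := by
        rw [zero_pow (by omega : n ≠ 0)]; ring
      rw [h5] at h4
      exact h4.mono_left nhdsWithin_le_nhds
    have h6 := h3.mul (reg_tendsto hreg)
    simpa using h6
  have h7 := h1.add h2
  rw [add_zero] at h7
  exact h7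

end Stmt12Aux

open Stmt12Aux in
/-- (i) comparison of regular solutions: `λ₁ < λ₂` implies
`v_{λ₁} < v_{λ₂}` on `[0,∞)`; (ii) `v_λ(r) < (C_*/r²)^{1/(1-m)} < g_λ(r)` for `r > 0`. -/
theorem stmt12 (n : ℕ) (m ρ₁ lam₁ lam₂ lam β α : ℝ)
    (hn : 3 ≤ n) (hm : 0 < m) (hm2 : m < ((n : ℝ) - 2) / n)
    (hρ : 0 < ρ₁) (hlam₁ : 0 < lam₁) (hlam₂ : lam₁ < lam₂) (hlam : 0 < lam)
    (hβ : β ≥ ρ₁ / ((n : ℝ) - 2 - n * m))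
    (hα : α = (2 * β + ρ₁) / (1 - m))
    (v₁ v₂ v g : ℝ → ℝ)
    (hv₁ : IsRegularSolution n m α β lam₁ v₁)
    (hv₂ : IsRegularSolution n m α β lam₂ v₂)
    (hv : IsRegularSolution n m α β lam v)
    (hg : IsSingularSolution n m α β g)
    (hglim : Tendsto (fun r => r ^ (α / β) * g r) (nhdsWithin 0 (Ioi 0))
      (nhds (lam ^ (-(ρ₁ / ((1 - m) * β)))))) :
    (∀ r, 0 ≤ r → v₁ r < v₂ r) ∧
    (∀ r > 0,
      v r < ((2 * m * ((n : ℝ) - 2 - n * m) / ((1 - m) * ρ₁)) / r ^ 2) ^ (1 / (1 - m)) ∧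
      ((2 * m * ((n : ℝ) - 2 - n * m) / ((1 - m) * ρ₁)) / r ^ 2) ^ (1 / (1 - m)) < g r) := by

  ------------------------------------------------------------------
  -- basic constants
  ------------------------------------------------------------------
  have hnR : (3:ℝ) ≤ (n:ℝ) := by exact_mod_cast hn
  have hn0 : (0:ℝ) < (n:ℝ) := by linarith
  set D : ℝ := (n:ℝ) - 2 - n * m with hDdef
  have hD : 0 < D := by
    have h' : m * (n:ℝ) < (n:ℝ) - 2 := (lt_div_iff₀ hn0).mp hm2
    have h'' : m * (n:ℝ) = (n:ℝ) * m := mul_comm _ _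
    rw [hDdef]; linarith
  have hm1 : m < 1 := by
    have h1 : ((n:ℝ) - 2) / n < 1 := by rw [div_lt_one hn0]; linarith
    linarith
  have h1m : 0 < 1 - m := by linarith
  set b1 : ℝ := ρ₁ / D with hb1def
  have hb1 : 0 < b1 := div_pos hρ hD
  have hββ : b1 ≤ β := hβ
  have hβ0 : 0 < β := lt_of_lt_of_le hb1 hββ
  have hα0 : 0 < α := by rw [hα]; apply div_pos <;> linarith
  set E : ℝ := 1 / (1 - m) with hEdef
  have hE : 0 < E := by rw [hEdef]; positivity
  set Cs : ℝ := 2 * m * D / ((1 - m) * ρ₁) with hCsdef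
  have hCs0 : 0 < Cs := by rw [hCsdef]; positivity
  have hCs_eq : Cs = 2 * m / ((1 - m) * b1) := by
    rw [hCsdef, hb1def]; field_simp
  have hc2 : ((n : ℝ) - 2 * E) * (β - b1) = (n : ℝ) * β - α := by
    have hD' : (n:ℝ) - 2 - n * m ≠ 0 := hD.ne'
    rw [hEdef, hα, hb1def, hDdef]; field_simp; ring
  have hEid : E * (1 - m) = 1 := by rw [hEdef]; field_simp
  have hn2E : (n:ℝ) - 2 * E = D / (1 - m) := by rw [hEdef, hDdef]; field_simp; ring
  have hαβ_nonneg : 0 ≤ (n:ℝ) * β - α := by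
    rw [← hc2, hn2E]
    have h9 : 0 ≤ β - b1 := by linarith
    positivity
  ------------------------------------------------------------------
  -- SolOK packages
  ------------------------------------------------------------------
  have sv₁ : SolOK n m α β v₁ :=
    solOK_of_ode hn hm (fun r hr => hv₁.2.1 r hr.le) hv₁.2.2.1 hv₁.2.2.2.2.2
  have sv₂ : SolOK n m α β v₂ :=
    solOK_of_ode hn hm (fun r hr => hv₂.2.1 r hr.le) hv₂.2.2.1 hv₂.2.2.2.2.2
  have sv : SolOK n m α β v :=
    solOK_of_ode hn hm (fun r hr => hv.2.1 r hr.le) hv.2.2.1 hv.2.2.2.2.2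
  have sg : SolOK n m α β g := solOK_of_ode hn hm hg.1 hg.2.1 hg.2.2
  obtain ⟨sU, hHFU⟩ := solOK_U (n := n) (m := m) (α := α) (β := β)
    hn hm hm1 hb1 hCs_eq hc2
  ------------------------------------------------------------------
  -- the power form of U
  ------------------------------------------------------------------
  have hpow_eq : ∀ q x : ℝ, 0 < x → (Cs / x ^ 2) ^ q = Cs ^ q * x ^ (-(2 * q)) := by
    intro q x hx
    rw [Real.div_rpow hCs0.le (by positivity), ← Real.rpow_natCast x 2,
      ← Real.rpow_mul hx.le, div_eq_mul_inv, ← Real.rpow_neg hx.le]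
    norm_num
  have hUpos : ∀ r : ℝ, 0 < r → 0 < (Cs / r ^ 2) ^ E := fun r hr =>
    Real.rpow_pos_of_pos (div_pos hCs0 (pow_pos hr 2)) _
  have hA : 0 < lam ^ (-(ρ₁ / ((1 - m) * β))) := Real.rpow_pos_of_pos hlam _
  ------------------------------------------------------------------
  -- limits: r^{α/β} U → 0, HF U → 0
  ------------------------------------------------------------------
  have heαβ : α / β - 2 * E = ρ₁ / ((1 - m) * β) := by
    rw [hα, hEdef]; field_simp; ring
  have heαβ_pos : 0 < α / β - 2 * E := by rw [heαβ]; positivity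
  have hT1 : Tendsto (fun r : ℝ => r ^ (α / β) * (Cs / r ^ 2) ^ E) (𝓝[>] (0:ℝ)) (𝓝 0) := by
    have base := (tendsto_rpow_zero heαβ_pos).const_mul (Cs ^ E)
    rw [mul_zero] at base
    refine base.congr' ?_
    filter_upwards [self_mem_nhdsWithin] with r (hr : 0 < r)
    rw [hpow_eq E r hr, show r ^ (α / β) * (Cs ^ E * r ^ (-(2 * E)))
        = Cs ^ E * (r ^ (α / β) * r ^ (-(2 * E))) by ring, ← Real.rpow_add hr,
      show α / β + -(2 * E) = α / β - 2 * E by ring]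
  have hn2E_pos : 0 < (n:ℝ) - 2 * E := by rw [hn2E]; positivity
  have hT2 : Tendsto (HF n m β (fun r => (Cs / r ^ 2) ^ (1 / (1 - m)))) (𝓝[>] (0:ℝ)) (𝓝 0) := by
    have base := (tendsto_rpow_zero hn2E_pos).const_mul ((β - b1) * Cs ^ (1 / (1 - m)))
    rw [mul_zero] at base
    refine base.congr' ?_
    filter_upwards [self_mem_nhdsWithin] with r (hr : 0 < r)
    rw [hHFU r hr]
  ------------------------------------------------------------------
  -- asymptotics of g near 0
  ------------------------------------------------------------------
  have hαβn : α / β ≤ (n:ℝ) := by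
    rw [div_le_iff₀ hβ0]
    linarith [hαβ_nonneg]
  have he2 : 0 < ((n:ℝ) - 2) / m - α / β := by
    have h9 : (n:ℝ) < ((n:ℝ) - 2) / m := by
      rw [lt_div_iff₀ hm]
      rw [hDdef] at hD
      linarith
    linarith
  have hasym : Tendsto (fun a : ℝ => a ^ ((n:ℝ) - 2) * g a ^ m) (𝓝[>] (0:ℝ)) (𝓝 0) := by
    have hinner : Tendsto (fun a : ℝ => a ^ (((n:ℝ) - 2) / m - α / β) * (a ^ (α / β) * g a))
        (𝓝[>] (0:ℝ)) (𝓝 0) := by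
      have := (tendsto_rpow_zero he2).mul hglim
      rw [zero_mul] at this
      exact this
    have hout : Tendsto (fun x : ℝ => x ^ m) (𝓝 (0:ℝ)) (𝓝 0) := by
      have h := (Real.continuousAt_rpow_const 0 m (Or.inr hm.le)).tendsto
      rwa [Real.zero_rpow hm.ne'] at h
    refine (hout.comp hinner).congr' ?_
    filter_upwards [self_mem_nhdsWithin] with a (ha : 0 < a)
    have hga := hg.1 a ha
    show (a ^ (((n:ℝ) - 2) / m - α / β) * (a ^ (α / β) * g a)) ^ m = a ^ ((n:ℝ) - 2) * g a ^ m
    rw [show a ^ (((n:ℝ) - 2) / m - α / β) * (a ^ (α / β) * g a)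
        = (a ^ (((n:ℝ) - 2) / m - α / β) * a ^ (α / β)) * g a by ring, ← Real.rpow_add ha,
      show ((n:ℝ) - 2) / m - α / β + α / β = ((n:ℝ) - 2) / m by ring,
      Real.mul_rpow (Real.rpow_nonneg ha.le _) hga.le, ← Real.rpow_mul ha.le,
      show ((n:ℝ) - 2) / m * m = (n:ℝ) - 2 by field_simp]
  have hHFg0 : ∀ r, 0 < r → 0 ≤ HF n m β g r :=
    HF_nonneg hn hm hβ0 hαβ_nonneg sg hasym
  ------------------------------------------------------------------
  -- U < g near 0
  ------------------------------------------------------------------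
  have hδUg : ∀ᶠ r in 𝓝[>] (0:ℝ), (Cs / r ^ 2) ^ E < g r := by
    have hev := hT1.eventually_lt hglim hA
    filter_upwards [hev, self_mem_nhdsWithin] with r h (hr : 0 < r)
    exact lt_of_mul_lt_mul_left h (Real.rpow_nonneg hr.le _)
  ------------------------------------------------------------------
  -- g^(m-1) → 0
  ------------------------------------------------------------------
  have hygt : Tendsto (fun a : ℝ => g a ^ (m - 1)) (𝓝[>] (0:ℝ)) (𝓝 0) := by
    have hexp3 : 0 < α / β * (1 - m) := by positivity
    have t1 : Tendsto (fun a : ℝ => (a ^ (α / β) * g a) ^ (m - 1)) (𝓝[>] (0:ℝ))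
        (𝓝 ((lam ^ (-(ρ₁ / ((1 - m) * β)))) ^ (m - 1))) :=
      ((Real.continuousAt_rpow_const _ (m - 1) (Or.inl hA.ne')).tendsto).comp hglim
    have t3 := t1.mul (tendsto_rpow_zero hexp3)
    rw [mul_zero] at t3
    refine t3.congr' ?_
    filter_upwards [self_mem_nhdsWithin] with a (ha : 0 < a)
    have hga := hg.1 a ha
    show (a ^ (α / β) * g a) ^ (m - 1) * a ^ (α / β * (1 - m)) = g a ^ (m - 1)
    rw [Real.mul_rpow (Real.rpow_nonneg ha.le _) hga.le, ← Real.rpow_mul ha.le,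
      show (a ^ (α / β * (m - 1)) * g a ^ (m - 1)) * a ^ (α / β * (1 - m))
        = (a ^ (α / β * (m - 1)) * a ^ (α / β * (1 - m))) * g a ^ (m - 1) by ring,
      ← Real.rpow_add ha, show α / β * (m - 1) + α / β * (1 - m) = 0 by ring,
      Real.rpow_zero, one_mul]
  ------------------------------------------------------------------
  -- case split on β = b1 or b1 < β
  ------------------------------------------------------------------
  rcases eq_or_lt_of_le hββ with hbe | hblt
  · -- CRITICAL CASE : β = b1
    have hcrit : (n:ℝ) * β - α = 0 := by rw [← hc2, ← hbe]; ring
    set q : ℝ := (1 - m) * β / (2 * m) with hqdef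
    have hq_eq : q * Cs = 1 := by
      rw [hqdef, hCs_eq, ← hbe]; field_simp
    have hregy : ∀ (lamu : ℝ) (u : ℝ → ℝ), IsRegularSolution n m α β lamu u → 0 < lamu →
        SolOK n m α β u → ∀ r, 0 < r → u r ^ (m - 1) = lamu ^ (m - 1) + q * r ^ 2 := by
      intro lamu u hreg hlamu su r hr
      have hHF0 : ∀ ρ, 0 < ρ → HF n m β u ρ = 0 := by
        intro ρ hρ'
        refine tendsto_nhds_unique ?_ (reg_HF_tendsto hn hreg)
        refine Tendsto.congr' ?_ (tendsto_const_nhds (x := HF n m β u ρ))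
        filter_upwards [self_mem_nhdsWithin] with a (ha : 0 < a)
        exact HF_const_of_crit su hcrit hρ' ha
      have hZd : ∀ x : ℝ, 0 < x → HasDerivAt (fun y => u y ^ (m - 1) - q * y ^ 2) 0 x := by
        intro x hx
        have hA2 := y_hasDeriv hn hm su hx (hHF0 x hx)
        have hB : HasDerivAt (fun y : ℝ => q * y ^ 2) (q * (2 * x)) x := by
          simpa [mul_comm, mul_assoc] using (hasDerivAt_pow 2 x).const_mul q
        have hC := hA2.sub hB
        refine hC.congr_deriv ?_
        rw [hqdef]
        field_simp
        ring
      have hZt : Tendsto (fun a => u a ^ (m - 1) - q * a ^ 2) (𝓝[>] (0:ℝ))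
          (𝓝 (lamu ^ (m - 1))) := by
        have t1 : Tendsto (fun a => u a ^ (m - 1)) (𝓝[>] (0:ℝ)) (𝓝 (lamu ^ (m - 1))) :=
          ((Real.continuousAt_rpow_const lamu (m - 1) (Or.inl hlamu.ne')).tendsto).comp
            (reg_tendsto hreg)
        have t2 : Tendsto (fun a : ℝ => q * a ^ 2) (𝓝[>] (0:ℝ)) (𝓝 0) := by
          have h4 : Continuous (fun a : ℝ => q * a ^ 2) := continuous_const.mul (continuous_pow 2)
          have h5 := (h4.tendsto 0).mono_left (nhdsWithin_le_nhds (s := Ioi (0:ℝ)))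
          simpa using h5
        simpa using t1.sub t2
      have hZr : u r ^ (m - 1) - q * r ^ 2 = lamu ^ (m - 1) := by
        refine tendsto_nhds_unique ?_ hZt
        refine Tendsto.congr' ?_ (tendsto_const_nhds (x := u r ^ (m - 1) - q * r ^ 2))
        filter_upwards [eventually_mem_set.mpr
          (Ioo_mem_nhdsGT_of_mem ⟨le_refl (0:ℝ), hr⟩)] with a ha
        exact eq_of_deriv_zero hZd ha.1 ha.2.le
      linarith
    have hy₁ := hregy lam₁ v₁ hv₁ hlam₁ sv₁
    have hy₂ := hregy lam₂ v₂ hv₂ (lt_trans hlam₁ hlam₂) sv₂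
    have hyv := hregy lam v hv hlam sv
    have hUy : ∀ r : ℝ, 0 < r → ((Cs / r ^ 2) ^ E) ^ (m - 1) = q * r ^ 2 := by
      intro r hr
      have hd0 : (0:ℝ) < Cs / r ^ 2 := div_pos hCs0 (pow_pos hr 2)
      rw [← Real.rpow_mul hd0.le, show E * (m - 1) = -1 by rw [hEdef]; field_simp; ring,
        Real.rpow_neg_one, inv_div, div_eq_iff hCs0.ne']
      linear_combination (-(r ^ 2)) * hq_eq
    have hmneg : m - 1 < 0 := by linarith
    have hi : ∀ r, 0 < r → v₁ r < v₂ r := by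
      intro r hr
      have h3 : lam₂ ^ (m - 1) < lam₁ ^ (m - 1) :=
        Real.rpow_lt_rpow_of_neg hlam₁ hlam₂ hmneg
      refine lt_of_rpow_lt (hv₁.2.1 r hr.le) (hv₂.2.1 r hr.le) hmneg ?_
      rw [hy₁ r hr, hy₂ r hr]
      linarith
    have hiia : ∀ r, 0 < r → v r < (Cs / r ^ 2) ^ E := by
      intro r hr
      refine lt_of_rpow_lt (hv.2.1 r hr.le) (hUpos r hr) hmneg ?_
      rw [hUy r hr, hyv r hr]
      have h5 : 0 < lam ^ (m - 1) := Real.rpow_pos_of_pos hlam _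
      linarith
    obtain ⟨L, hL0, hLconst⟩ : ∃ L : ℝ, 0 ≤ L ∧ ∀ r : ℝ, 0 < r → HF n m β g r = L :=
      ⟨HF n m β g 1, hHFg0 1 one_pos, fun r hr => HF_const_of_crit sg hcrit hr one_pos⟩
    have hiib : ∀ r, 0 < r → (Cs / r ^ 2) ^ E < g r := by
      rcases eq_or_lt_of_le hL0 with hLz | hLpos
      · exfalso
        have hZd : ∀ x : ℝ, 0 < x → HasDerivAt (fun y => g y ^ (m - 1) - q * y ^ 2) 0 x := by
          intro x hx
          have hA2 := y_hasDeriv hn hm sg hx ((hLconst x hx).trans hLz.symm)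
          have hB : HasDerivAt (fun y : ℝ => q * y ^ 2) (q * (2 * x)) x := by
            simpa [mul_comm, mul_assoc] using (hasDerivAt_pow 2 x).const_mul q
          have hC := hA2.sub hB
          refine hC.congr_deriv ?_
          rw [hqdef]
          field_simp
          ring
        have hZt : Tendsto (fun a => g a ^ (m - 1) - q * a ^ 2) (𝓝[>] (0:ℝ)) (𝓝 0) := by
          have t2 : Tendsto (fun a : ℝ => q * a ^ 2) (𝓝[>] (0:ℝ)) (𝓝 0) := by
            have h4 : Continuous (fun a : ℝ => q * a ^ 2) := continuous_const.mul (continuous_pow 2)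
            have h5 := (h4.tendsto 0).mono_left (nhdsWithin_le_nhds (s := Ioi (0:ℝ)))
            simpa using h5
          simpa using hygt.sub t2
        have hgU : ∀ r : ℝ, 0 < r → g r = (Cs / r ^ 2) ^ E := by
          intro r hr
          have hZr : g r ^ (m - 1) - q * r ^ 2 = 0 := by
            refine tendsto_nhds_unique ?_ hZt
            refine Tendsto.congr' ?_ (tendsto_const_nhds (x := g r ^ (m - 1) - q * r ^ 2))
            filter_upwards [eventually_mem_set.mpr
              (Ioo_mem_nhdsGT_of_mem ⟨le_refl (0:ℝ), hr⟩)] with a ha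
            exact eq_of_deriv_zero hZd ha.1 ha.2.le
          have h7 : g r ^ (m - 1) = ((Cs / r ^ 2) ^ E) ^ (m - 1) := by
            rw [hUy r hr]; linarith
          exact (Real.rpow_left_inj (hg.1 r hr).le (hUpos r hr).le
            (by linarith : m - 1 ≠ 0)).mp h7
        have hcontr : Tendsto (fun r : ℝ => r ^ (α / β) * g r) (𝓝[>] (0:ℝ)) (𝓝 0) := by
          refine hT1.congr' ?_
          filter_upwards [self_mem_nhdsWithin] with a (ha : 0 < a)
          rw [hgU a ha]
        have h8 := tendsto_nhds_unique hglim hcontr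
        rw [h8] at hA
        exact lt_irrefl 0 hA
      · intro r hr
        set Zg : ℝ → ℝ := fun y => g y ^ (m - 1) - q * y ^ 2 with hZgdef
        have hψd : ∀ x : ℝ, 0 < x → HasDerivAt Zg
            (-((1 - m) / m) * (L / (x ^ (n - 1) * g x))) x := by
          intro x hx
          have hA2 := y_hasDeriv hn hm sg hx (hLconst x hx)
          have hB : HasDerivAt (fun y : ℝ => q * y ^ 2) (q * (2 * x)) x := by
            simpa [mul_comm, mul_assoc] using (hasDerivAt_pow 2 x).const_mul q
          have hC := hA2.sub hB
          refine hC.congr_deriv ?_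
          rw [hqdef]
          field_simp
          ring
        have hdcont : ContinuousOn (fun x : ℝ => -((1 - m) / m) * (L / (x ^ (n - 1) * g x)))
            (Ioi 0) := by
          refine continuousOn_const.mul (ContinuousOn.div continuousOn_const ?_ ?_)
          · exact ((continuous_pow (n - 1)).continuousOn).mul (sg.contOn subset_rfl)
          · intro x hx
            have hx0 : (0:ℝ) < x := hx
            exact ne_of_gt (mul_pos (pow_pos hx0 _) (sg.pos x hx0))
        have hdneg : ∀ x : ℝ, 0 < x →
            -((1 - m) / m) * (L / (x ^ (n - 1) * g x)) < 0 := by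
          intro x hx
          have h8 : 0 < (1 - m) / m * (L / (x ^ (n - 1) * g x)) := by
            have h9 := sg.pos x hx
            have h10 := pow_pos hx (n - 1)
            positivity
          linarith
        have hdec : ∀ a b : ℝ, 0 < a → a < b → Zg b < Zg a := fun a b ha hab =>
          strict_decrease ha hab hψd hdcont hdneg
        have hZt : Tendsto Zg (𝓝[>] (0:ℝ)) (𝓝 0) := by
          have t2 : Tendsto (fun a : ℝ => q * a ^ 2) (𝓝[>] (0:ℝ)) (𝓝 0) := by
            have h4 : Continuous (fun a : ℝ => q * a ^ 2) := continuous_const.mul (continuous_pow 2)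
            have h5 := (h4.tendsto 0).mono_left (nhdsWithin_le_nhds (s := Ioi (0:ℝ)))
            simpa using h5
          simpa [hZgdef] using hygt.sub t2
        have hr2 : 0 < r / 2 := by linarith
        have hZhalf : Zg (r / 2) ≤ 0 := by
          refine ge_of_tendsto hZt ?_
          filter_upwards [eventually_mem_set.mpr
            (Ioo_mem_nhdsGT_of_mem ⟨le_refl (0:ℝ), hr2⟩)] with a ha
          exact (hdec a (r / 2) ha.1 ha.2).le
        have hZr : Zg r < 0 := lt_of_lt_of_le (hdec (r / 2) r hr2 (by linarith)) hZhalf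
        refine lt_of_rpow_lt (hUpos r hr) (hg.1 r hr) hmneg ?_
        rw [hUy r hr]
        have h11 : g r ^ (m - 1) - q * r ^ 2 < 0 := hZr
        linarith
    refine ⟨?_, fun r hr => ⟨hiia r hr, hiib r hr⟩⟩
    intro r hr
    rcases eq_or_lt_of_le hr with h0 | h0
    · rw [← h0, hv₁.2.2.2.1, hv₂.2.2.2.1]
      exact hlam₂
    · exact hi r h0
  · -- SUPERCRITICAL CASE : b1 < β
    have hαβpos : 0 < (n:ℝ) * β - α := by
      rw [← hc2, hn2E]
      have h9 : 0 < β - b1 := sub_pos.mpr hblt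
      positivity
    have hi : ∀ r, 0 < r → v₁ r < v₂ r := by
      refine cmp hm hαβpos sv₁ sv₂ ?_ ?_
      · exact exists_delta ((reg_tendsto hv₁).eventually_lt (reg_tendsto hv₂) hlam₂)
      · intro ε hε R hR
        have hT' : Tendsto (fun a => HF n m β v₂ a - HF n m β v₁ a) (𝓝[>] (0:ℝ)) (𝓝 0) := by
          have := (reg_HF_tendsto hn hv₂).sub (reg_HF_tendsto hn hv₁)
          rwa [sub_zero] at this
        exact exists_near (hT'.eventually (eventually_gt_nhds (by linarith))) hR
    have hUtop : Tendsto (fun r : ℝ => (Cs / r ^ 2) ^ E) (𝓝[>] (0:ℝ)) atTop := by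
      have h0 : Tendsto (fun a : ℝ => a ^ (2 * E)) (𝓝[>] (0:ℝ)) (𝓝[>] (0:ℝ)) := by
        refine tendsto_nhdsWithin_of_tendsto_nhds_of_eventually_within _
          (tendsto_rpow_zero (by positivity)) ?_
        filter_upwards [self_mem_nhdsWithin] with a (ha : 0 < a)
        exact Real.rpow_pos_of_pos ha _
      have h2 := (tendsto_inv_nhdsGT_zero.comp h0).const_mul_atTop
        (Real.rpow_pos_of_pos hCs0 E)
      refine h2.congr' ?_
      filter_upwards [self_mem_nhdsWithin] with a (ha : 0 < a)
      show Cs ^ E * ((fun a : ℝ => a ^ (2 * E)) a)⁻¹ = (Cs / a ^ 2) ^ E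
      rw [hpow_eq E a ha, Real.rpow_neg ha.le]
    have hiia : ∀ r, 0 < r → v r < (Cs / r ^ 2) ^ E := by
      refine cmp hm hαβpos sv sU ?_ ?_
      · refine exists_delta ?_
        have h1 : ∀ᶠ r in 𝓝[>] (0:ℝ), v r < lam + 1 :=
          (reg_tendsto hv).eventually_lt tendsto_const_nhds (lt_add_one lam)
        have h2 : ∀ᶠ r in 𝓝[>] (0:ℝ), lam + 1 < (Cs / r ^ 2) ^ E :=
          hUtop.eventually_gt_atTop (lam + 1)
        filter_upwards [h1, h2] with r ha hb
        linarith
      · intro ε hε R hR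
        have hT' : Tendsto (fun a => HF n m β (fun r => (Cs / r ^ 2) ^ (1 / (1 - m))) a
            - HF n m β v a) (𝓝[>] (0:ℝ)) (𝓝 0) := by
          have := hT2.sub (reg_HF_tendsto hn hv)
          rwa [sub_zero] at this
        exact exists_near (hT'.eventually (eventually_gt_nhds (by linarith))) hR
    have hiib : ∀ r, 0 < r → (Cs / r ^ 2) ^ E < g r := by
      refine cmp hm hαβpos sU sg (exists_delta hδUg) ?_
      intro ε hε R hR
      have hev : ∀ᶠ a in 𝓝[>] (0:ℝ),
          HF n m β (fun r => (Cs / r ^ 2) ^ (1 / (1 - m))) a < ε :=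
        hT2.eventually (eventually_lt_nhds hε)
      refine exists_near ?_ hR
      filter_upwards [hev, self_mem_nhdsWithin] with a h (ha : 0 < a)
      have := hHFg0 a ha
      linarith
    refine ⟨?_, fun r hr => ⟨hiia r hr, hiib r hr⟩⟩
    intro r hr
    rcases eq_or_lt_of_le hr with h0 | h0
    · rw [← h0, hv₁.2.2.2.1, hv₂.2.2.2.1]
      exact hlam₂
    · exact hi r h0
end
end

section
/- Let n ≥ 3 be an integer, 0 < m < (n-2)/n, ρ₁ > 0, λ₁ > 0, λ₂ > 0, β > β₁ = ρ₁/(n-2-nm) and α = (2β+ρ₁)/(1-m), and suppose A(β)² ≥ 8(n-2-nm)(1-m) where A(β) = n-2-(n+2)m + 2β(n-2-nm)/ρ₁; set γ₁ = (A(β) − √(A(β)² − 8(n-2-nm)(1-m)))/(2(1-m)). For i = 1,2 let v_{λ_i} be a radially symmetric solution of Δv^m + αv + βx·∇v = 0, v > 0, in ℝ^n with v_{λ_i}(0) = λ_i satisfying lim_{r→∞} r^{γ₁}((r²/C_*)^{1/(1-m)} v_{λ_i}(r) − 1) = −B_{λ_i} for constants B_{λ₁}, B_{λ₂}, and assume radially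 symmetric solutions with prescribed value at 0 are unique. Then B_{λ₂} = (λ₁/λ₂)^{(1-m)γ₁/2} B_{λ₁}. -/
open Real Filter Set

noncomputable section

/-- `A(β) = n-2-(n+2)m + 2β(n-2-nm)/ρ₁`. -/
def Abeta (n : ℕ) (m ρ₁ β : ℝ) : ℝ :=
  (n : ℝ) - 2 - ((n : ℝ) + 2) * m + 2 * β * ((n : ℝ) - 2 - n * m) / ρ₁

/-- The smaller root `γ₁` of the characteristic equation. -/
def gamma1 (n : ℕ) (m ρ₁ β : ℝ) : ℝ :=
  (Abeta n m ρ₁ β -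
      Real.sqrt (Abeta n m ρ₁ β ^ 2 - 8 * ((n : ℝ) - 2 - n * m) * (1 - m))) /
    (2 * (1 - m))

/-- The constant `C_* = 2m(n-2-nm)/((1-m)ρ₁)`. -/
def Cstar (n : ℕ) (m ρ₁ : ℝ) : ℝ :=
  2 * m * ((n : ℝ) - 2 - n * m) / ((1 - m) * ρ₁)

lemma aux_deriv_const_mul_comp (C k : ℝ) (hC : C ≠ 0) (hk : k ≠ 0) (g : ℝ → ℝ) (r : ℝ) :
    deriv (fun x => C * g (k * x)) r = C * k * deriv g (k * r) := by
  by_cases hg : DifferentiableAt ℝ g (k * r)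
  · have h1 : HasDerivAt (fun x : ℝ => k * x) k r := by
      simpa using (hasDerivAt_id r).const_mul k
    have h2 : HasDerivAt (fun x => g (k * x)) (deriv g (k * r) * k) r :=
      hg.hasDerivAt.comp r h1
    have h3 : HasDerivAt (fun x => C * g (k * x)) (C * (deriv g (k * r) * k)) r :=
      h2.const_mul C
    rw [h3.deriv]; ring
  · have hF : ¬ DifferentiableAt ℝ (fun x => C * g (k * x)) r := by
      intro hF
      apply hg
      have h1 : DifferentiableAt ℝ (fun y : ℝ => k⁻¹ * y) (k * r) :=
        (differentiable_id.const_mul k⁻¹).differentiableAt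
      have hfr : k⁻¹ * (k * r) = r := by field_simp
      have h2 : DifferentiableAt ℝ ((fun x => C * g (k * x)) ∘ (fun y : ℝ => k⁻¹ * y)) (k * r) := by
        exact DifferentiableAt.comp _ (by rw [hfr]; exact hF) h1
      have h3 : ((fun x => C * g (k * x)) ∘ (fun y : ℝ => k⁻¹ * y)) = fun y => C * g y := by
        funext y; simp [Function.comp, mul_inv_cancel_left₀ hk]
      rw [h3] at h2
      have h4 := h2.const_mul C⁻¹
      simpa [inv_mul_cancel_left₀ hC] using h4
    rw [deriv_zero_of_not_differentiableAt hg, deriv_zero_of_not_differentiableAt hF]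
    ring

lemma ode_scale (nr K k kc r A Bd Cv Dv α β : ℝ) (hk : k ≠ 0) (hr : r ≠ 0)
    (hKkk : K * k * k = kc)
    (hode : A + nr / (k * r) * Bd + α * Cv + β * (k * r) * Dv = 0) :
    K * k * k * A + nr / r * (K * k * Bd) + α * (kc * Cv) + β * r * (kc * k * Dv) = 0 := by
  have h2 : (k * r) * A + nr * Bd + (k * r) * (α * Cv) + β * (k * r) ^ 2 * Dv = 0 := by
    have h := congrArg (fun t => (k * r) * t) hode
    simp only [mul_zero] at h
    rw [← h]
    field_simp
  have h3 : r * (K * k * k * A + nr / r * (K * k * Bd) + α * (kc * Cv) + β * r * (kc * k * Dv)) = 0 := by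
    have h4 : r * (nr / r * (K * k * Bd)) = nr * (K * k * Bd) := by field_simp
    rw [mul_add, mul_add, mul_add, h4]
    linear_combination (K * k) * h2 - (r * α * Cv + β * r ^ 2 * k * Dv) * hKkk
  rcases mul_eq_zero.mp h3 with h | h
  · exact absurd h hr
  · exact h


/-- relation between the second-order asymptotic constants of two regular
solutions: `B_{λ₂} = (λ₁/λ₂)^{(1-m)γ₁/2} B_{λ₁}`. -/
theorem stmt17 (n : ℕ) (m ρ₁ lam₁ lam₂ β α B₁ B₂ : ℝ)
    (hn : 3 ≤ n) (hm : 0 < m) (hm2 : m < ((n : ℝ) - 2) / n)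
    (hρ : 0 < ρ₁) (hlam₁ : 0 < lam₁) (hlam₂ : 0 < lam₂)
    (hβ : β > ρ₁ / ((n : ℝ) - 2 - n * m))
    (hα : α = (2 * β + ρ₁) / (1 - m))
    (hA : Abeta n m ρ₁ β ^ 2 ≥ 8 * ((n : ℝ) - 2 - n * m) * (1 - m))
    (v₁ v₂ : ℝ → ℝ)
    (hv₁ : IsRegularSolution n m α β lam₁ v₁)
    (hv₂ : IsRegularSolution n m α β lam₂ v₂)
    (hasym₁ : Tendsto (fun r =>
        r ^ gamma1 n m ρ₁ β *
          ((r ^ 2 / Cstar n m ρ₁) ^ (1 / (1 - m)) * v₁ r - 1))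
      atTop (nhds (-B₁)))
    (hasym₂ : Tendsto (fun r =>
        r ^ gamma1 n m ρ₁ β *
          ((r ^ 2 / Cstar n m ρ₁) ^ (1 / (1 - m)) * v₂ r - 1))
      atTop (nhds (-B₂)))
    (huniq : ∀ lam > 0, ∀ v w : ℝ → ℝ,
      IsRegularSolution n m α β lam v → IsRegularSolution n m α β lam w →
      ∀ r, 0 ≤ r → v r = w r) :
    B₂ = (lam₁ / lam₂) ^ ((1 - m) * gamma1 n m ρ₁ β / 2) * B₁ := by
  have hn3 : (3 : ℝ) ≤ (n : ℝ) := by exact_mod_cast hn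
  have hn0 : (0 : ℝ) < (n : ℝ) := by linarith
  have hm1 : m < 1 := by
    have : ((n : ℝ) - 2) / n < 1 := by
      rw [div_lt_one hn0]; linarith
    linarith
  have h1m : (0 : ℝ) < 1 - m := by linarith
  have hnm : (0 : ℝ) < (n : ℝ) - 2 - n * m := by
    have := (lt_div_iff₀ hn0).mp hm2
    nlinarith
  have hCs : (0 : ℝ) < Cstar n m ρ₁ := by
    unfold Cstar
    apply div_pos (by nlinarith) (mul_pos h1m hρ)
  set γ := gamma1 n m ρ₁ β with hγ
  set Cs := Cstar n m ρ₁ with hCsdef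
  set e := 1 / (1 - m) with he
  -- scaling constant
  have hq : (0 : ℝ) < lam₂ / lam₁ := div_pos hlam₂ hlam₁
  set k := (lam₂ / lam₁) ^ ((1 - m) / 2) with hkdef
  have hk0 : 0 < k := rpow_pos_of_pos hq _
  set c := 2 / (1 - m) with hc
  set kc := k ^ c with hkc_def
  have hkc : 0 < kc := rpow_pos_of_pos hk0 _
  set K := kc ^ m with hKdef
  have hK0 : 0 < K := rpow_pos_of_pos hkc _
  have hkc_val : kc = lam₂ / lam₁ := by
    rw [hkc_def, hkdef, ← Real.rpow_mul hq.le]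
    rw [show (1 - m) / 2 * c = 1 by rw [hc]; field_simp]
    exact Real.rpow_one _
  have hKkk : K * k * k = kc := by
    rw [hKdef, hkc_def, ← Real.rpow_mul hk0.le]
    rw [mul_assoc, show k * k = k ^ ((2:ℕ):ℝ) by rw [Real.rpow_natCast]; ring]
    rw [← Real.rpow_add hk0]
    congr 1
    push_cast
    rw [hc]; field_simp; ring
  obtain ⟨hv₁c, hv₁p, hv₁s, hv₁0, hv₁lim, hv₁ode⟩ := hv₁
  -- the rescaled solution
  have hupos : ∀ x : ℝ, 0 < x → 0 < v₁ (k * x) := fun x hx => hv₁p _ (by positivity)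
  have hmulr : ∀ x : ℝ, 0 < x → (kc * v₁ (k * x)) ^ m = K * (v₁ (k * x)) ^ m := by
    intro x hx
    rw [Real.mul_rpow hkc.le (hupos x hx).le, hKdef]
  have hev : ∀ r : ℝ, 0 < r →
      (fun x => (kc * v₁ (k * x)) ^ m) =ᶠ[nhds r] (fun x => K * (fun y => v₁ y ^ m) (k * x)) := by
    intro r hr
    filter_upwards [isOpen_Ioi.mem_nhds hr] with x hx
    exact hmulr x hx
  have hder1 : ∀ r : ℝ, 0 < r →
      deriv (fun x => (kc * v₁ (k * x)) ^ m) r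
        = K * k * deriv (fun y => v₁ y ^ m) (k * r) := by
    intro r hr
    rw [(hev r hr).deriv_eq]
    exact aux_deriv_const_mul_comp K k hK0.ne' hk0.ne' (fun y => v₁ y ^ m) r
  have hder2 : ∀ r : ℝ, 0 < r →
      deriv (deriv (fun x => (kc * v₁ (k * x)) ^ m)) r
        = K * k * k * deriv (deriv (fun y => v₁ y ^ m)) (k * r) := by
    intro r hr
    rw [((hev r hr).deriv).deriv_eq]
    have hfun : deriv (fun x => K * (fun y => v₁ y ^ m) (k * x))
        = fun x => (K * k) * deriv (fun y => v₁ y ^ m) (k * x) := by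
      funext x
      exact aux_deriv_const_mul_comp K k hK0.ne' hk0.ne' (fun y => v₁ y ^ m) x
    rw [hfun]
    rw [aux_deriv_const_mul_comp (K * k) k (by positivity) hk0.ne' (deriv (fun y => v₁ y ^ m)) r]
  have hderw : ∀ r : ℝ, deriv (fun x => kc * v₁ (k * x)) r = kc * k * deriv v₁ (k * r) :=
    fun r => aux_deriv_const_mul_comp kc k hkc.ne' hk0.ne' v₁ r
  have hw : IsRegularSolution n m α β lam₂ (fun x => kc * v₁ (k * x)) := by
    refine ⟨?_, ?_, ?_, ?_, ?_, ?_⟩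
    · have hcomp : ContinuousOn (fun x : ℝ => v₁ (k * x)) (Ici 0) :=
        hv₁c.comp ((continuous_const.mul continuous_id).continuousOn)
          (fun x hx => by simp only [mem_Ici] at *; positivity)
      exact continuousOn_const.mul hcomp
    · intro r hr
      exact mul_pos hkc (hv₁p _ (by positivity))
    · have hin : ContDiffOn ℝ (⊤ : ℕ∞) (fun x : ℝ => k * x) (Ioi 0) :=
        (contDiff_const.mul contDiff_id).contDiffOn
      have := hv₁s.comp hin (fun x hx => by
        simp only [mem_Ioi] at *; positivity)
      exact contDiffOn_const.mul this
    · show kc * v₁ (k * 0) = lam₂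
      rw [mul_zero, hv₁0, hkc_val]
      field_simp
    · have hmap : Tendsto (fun r : ℝ => k * r) (nhdsWithin 0 (Ioi 0)) (nhdsWithin 0 (Ioi 0)) := by
        rw [tendsto_nhdsWithin_iff]
        constructor
        · have : Tendsto (fun r : ℝ => k * r) (nhds 0) (nhds 0) := by
            simpa using (continuous_mul_left k).tendsto (0 : ℝ)
          exact this.mono_left nhdsWithin_le_nhds
        · filter_upwards [self_mem_nhdsWithin] with r hr
          simp only [mem_Ioi] at *; positivity
      have h0 := hv₁lim.comp hmap
      have h1 := h0.const_mul (K * k / k ^ ((n : ℝ) - 1))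
      rw [mul_zero] at h1
      apply h1.congr'
      filter_upwards [self_mem_nhdsWithin] with r hr
      simp only [mem_Ioi] at hr
      simp only [Function.comp]
      rw [hder1 r hr, Real.mul_rpow hk0.le hr.le]
      have hkn : (0:ℝ) < k ^ ((n : ℝ) - 1) := rpow_pos_of_pos hk0 _
      field_simp
    · intro r hr
      have hkr : 0 < k * r := by positivity
      have hode := hv₁ode (k * r) hkr
      simp only []
      rw [hder1 r hr, hder2 r hr, hderw r]
      exact ode_scale ((n:ℝ) - 1) K k kc r _ _ _ _ α β hk0.ne' hr.ne' hKkk hode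
  -- identify v₂ with the rescaled solution
  have hvw : ∀ r : ℝ, 0 ≤ r → v₂ r = kc * v₁ (k * r) :=
    huniq lam₂ hlam₂ v₂ _ hv₂ hw
  -- transfer the asymptotics
  have hmapT : Tendsto (fun r : ℝ => k * r) atTop atTop :=
    Tendsto.const_mul_atTop hk0 tendsto_id
  have h1 := hasym₁.comp hmapT
  have h2 := h1.const_mul (k ^ (-γ))
  have heq : ∀ᶠ r in atTop, (k ^ (-γ)) *
        ((fun r => r ^ γ * ((r ^ 2 / Cs) ^ e * v₁ r - 1)) ∘ (fun r : ℝ => k * r)) r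
      = r ^ γ * ((r ^ 2 / Cs) ^ e * v₂ r - 1) := by
    filter_upwards [eventually_gt_atTop 0] with r hr
    simp only [Function.comp]
    rw [hvw r hr.le]
    have e1 : ((k * r) ^ 2 / Cs) ^ e = kc * (r ^ 2 / Cs) ^ e := by
      rw [mul_pow, mul_div_assoc, Real.mul_rpow (sq_nonneg k) (by positivity)]
      congr 1
      rw [← Real.rpow_natCast k 2, ← Real.rpow_mul hk0.le, hkc_def]
      congr 1
      push_cast
      rw [he, hc]; ring
    have e2 : (k * r) ^ γ = k ^ γ * r ^ γ := Real.mul_rpow hk0.le hr.le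
    have e3 : k ^ (-γ) * k ^ γ = 1 := by
      rw [← Real.rpow_add hk0]; simp
    rw [e1, e2]
    calc k ^ (-γ) * (k ^ γ * r ^ γ * (kc * (r ^ 2 / Cs) ^ e * v₁ (k * r) - 1))
        = (k ^ (-γ) * k ^ γ) * (r ^ γ * (kc * (r ^ 2 / Cs) ^ e * v₁ (k * r) - 1)) := by ring
      _ = r ^ γ * ((r ^ 2 / Cs) ^ e * (kc * v₁ (k * r)) - 1) := by rw [e3]; ring
  have hT : Tendsto (fun r => r ^ γ * ((r ^ 2 / Cs) ^ e * v₂ r - 1)) atTop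
      (nhds (k ^ (-γ) * -B₁)) := h2.congr' heq
  have hBB : -B₂ = k ^ (-γ) * -B₁ := tendsto_nhds_unique hasym₂ hT
  have hkγ : k ^ (-γ) = (lam₁ / lam₂) ^ ((1 - m) * γ / 2) := by
    rw [hkdef, ← Real.rpow_mul hq.le]
    rw [show lam₁ / lam₂ = (lam₂ / lam₁)⁻¹ by rw [inv_div]]
    rw [Real.inv_rpow hq.le, ← Real.rpow_neg hq.le]
    congr 1
    ring
  rw [← hkγ]
  linarith [hBB]
end
end
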